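/- Let G be a finite group. The functor −×_G−: Fin_G × ^G Fin → Fin, sending (S, Y) to S ×_G Y = (S × Y)/~ with ~ generated by (sg, y) ~ (s, gy), is a perfect pairing: it preserves pullbacks, finite coproducts, and epimorphisms separately in each variable, and the two induced functors Fin_G → Fun_pce(^G Fin, Fin) and ^G Fin → Fun_pce(Fin_G, Fin) are both equivalences of categories. -/

import Mathlib

open CategoryTheory CategoryTheory.Limits MulOpposite

namespace Paper

/-- A functor preserves pullbacks, finite coproducts, and epimorphisms. -/
def PreservesPCE {C : Type*} {D : Type*} [Category C] [Category D] (F : C ⥤ D) : Prop :=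
  Nonempty (PreservesLimitsOfShape WalkingCospan F) ∧
  (∀ (J : Type) [Finite J], Nonempty (PreservesColimitsOfShape (Discrete J) F)) ∧
  F.PreservesEpimorphisms

/-- `Fun_pce C D`: the full subcategory of the functor category spanned by the functors
preserving pullbacks, finite coproducts and epimorphisms. -/
abbrev FunPCE (C : Type*) (D : Type*) [Category C] [Category D] :=
  ObjectProperty.FullSubcategory (fun F : C ⥤ D => PreservesPCE F)

/-- Finite sets with an action of the monoid `M`. -/
abbrev ActCat (M : Type) [Monoid M] := Action FintypeCat.{0} (MonCat.of M)

/-- `Fin_G`: finite right `G`-sets (encoded as left `Gᵐᵒᵖ`-actions). -/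
abbrev FinRight (G : Type) [Group G] := ActCat Gᵐᵒᵖ

/-- `^G Fin`: the category of finite *free* left `G`-sets. -/
abbrev FinFreeL (G : Type) [Group G] :=
  ObjectProperty.FullSubcategory (fun X : ActCat G => ∀ (g : G) (x : X.V), (X.ρ g).hom x = x → g = 1)

/-- Finite `(G,H)`-bisets: a left `G`-action and a commuting right `H`-action. -/
abbrev BiAct (G H : Type) [Group G] [Group H] := ActCat (G × Hᵐᵒᵖ)

/-- The left `G`-action of a `(G,H)`-biset is free. -/
def LeftFree {G H : Type} [Group G] [Group H] (X : BiAct G H) : Prop :=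
  ∀ (g : G) (x : X.V), (X.ρ (g, 1)).hom x = x → g = 1

/-- `^G Fin_H`: finite `(G,H)`-bisets whose left `G`-action is free. -/
abbrev BiFin (G H : Type) [Group G] [Group H] :=
  ObjectProperty.FullSubcategory (fun X : BiAct G H => LeftFree X)

/-- The separable `(G,H)`-biset `G × T` attached to a finite right `H`-set `T`,
with actions `g • (g', t) • h = (g * g', t • h)`. -/
noncomputable def sepBiset (G H : Type) [Group G] [Group H] [Fintype G]
    (T : ActCat Hᵐᵒᵖ) : BiAct G H where
  V := FintypeCat.of (G × T.V)
  ρ :=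
    { toFun := fun m => FintypeCat.homMk (fun p => (m.1 * p.1, (T.ρ m.2).hom p.2))
      map_one' := by
        apply FintypeCat.hom_ext; intro p
        show ((1 : G) * p.1, (T.ρ 1).hom p.2) = p
        simp
      map_mul' := by
        intro a b
        apply FintypeCat.hom_ext; intro p
        show ((a.1 * b.1) * p.1, (T.ρ (a.2 * b.2)).hom p.2)
          = (a.1 * (b.1 * p.1), (T.ρ a.2).hom ((T.ρ b.2).hom p.2))
        rw [mul_assoc, map_mul]
        rfl }

/-- A `(G,H)`-biset is separable if it is isomorphic to `G × T`
for some finite right `H`-set `T`. -/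
def Separable (G H : Type) [Group G] [Group H] [Fintype G] (X : BiAct G H) : Prop :=
  ∃ T : ActCat Hᵐᵒᵖ, Nonempty (X ≅ sepBiset G H T)

/-- `(^G Fin_H)^sep`: the full subcategory of separable bisets. -/
abbrev SepCat (G H : Type) [Group G] [Group H] [Fintype G] :=
  ObjectProperty.FullSubcategory (fun X : BiFin G H => Separable G H X.obj)

variable {G H : Type} [Group G] [Group H]

/-- The relation generating `X ×_{(H,G)} Y`: `(x·g, y) ~ (x, g·y)` and `(h·x, y) ~ (x, y·h)`. -/
def pairRel (X : BiAct H G) (Y : BiAct G H) : X.V × Y.V → X.V × Y.V → Prop :=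
  fun p q =>
    (∃ g : G, p.1 = (X.ρ (1, op g)).hom q.1 ∧ q.2 = (Y.ρ (g, 1)).hom p.2) ∨
    (∃ h : H, q.1 = (X.ρ (h, 1)).hom p.1 ∧ p.2 = (Y.ρ (1, op h)).hom q.2)

/-- `X ×_{(H,G)} Y`: the quotient of `X × Y` by the equivalence relation generated by
`(x·g, y) ~ (x, g·y)` and `(h·x, y) ~ (x, y·h)`. -/
def PairSet (X : BiAct H G) (Y : BiAct G H) : Type := Quot (pairRel X Y)

instance (X : BiAct H G) (Y : BiAct G H) : Finite (PairSet X Y) :=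
  Quot.finite _

/-- `X ×_{(H,G)} Y` as an object of the category of finite sets. -/
noncomputable def pairObj (X : BiAct H G) (Y : BiAct G H) : FintypeCat :=
  letI := Fintype.ofFinite (PairSet X Y)
  FintypeCat.of (PairSet X Y)

/-- Functoriality of `X ×_{(H,G)} Y` in `X`. -/
noncomputable def pairMapFst {X X' : BiAct H G} (f : X ⟶ X') (Y : BiAct G H) :
    pairObj X Y ⟶ pairObj X' Y :=
  FintypeCat.homMk <| Quot.map (fun p => (f.hom p.1, p.2)) (by
    rintro ⟨x, y⟩ ⟨x', y'⟩ (⟨g, h1, h2⟩ | ⟨h, h1, h2⟩)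
    · left
      refine ⟨g, ?_, h2⟩
      have := ConcreteCategory.congr_hom (f.comm (1, op g)) x'
      simp only [FintypeCat.comp_apply] at this
      dsimp only at h1 ⊢
      rw [h1]; exact this
    · right
      refine ⟨h, ?_, h2⟩
      have := ConcreteCategory.congr_hom (f.comm (h, 1)) x
      simp only [FintypeCat.comp_apply] at this
      dsimp only at h1 ⊢
      rw [h1]; exact this)

/-- Functoriality of `X ×_{(H,G)} Y` in `Y`. -/
noncomputable def pairMapSnd (X : BiAct H G) {Y Y' : BiAct G H} (f : Y ⟶ Y') :
    pairObj X Y ⟶ pairObj X Y' :=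
  FintypeCat.homMk <| Quot.map (fun p => (p.1, f.hom p.2)) (by
    rintro ⟨x, y⟩ ⟨x', y'⟩ (⟨g, h1, h2⟩ | ⟨h, h1, h2⟩)
    · left
      refine ⟨g, h1, ?_⟩
      have := ConcreteCategory.congr_hom (f.comm (g, 1)) y
      simp only [FintypeCat.comp_apply] at this
      dsimp only at h2 ⊢
      rw [h2]; exact this
    · right
      refine ⟨h, h1, ?_⟩
      have := ConcreteCategory.congr_hom (f.comm (1, op h)) y'
      simp only [FintypeCat.comp_apply] at this
      dsimp only at h2 ⊢
      rw [h2]; exact this)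

/-- For a fixed biset `X`, the functor `X ×_{(H,G)} -` on all of `^G Fin_H`. -/
noncomputable def pairFstFunctorRaw (X : BiAct H G) : BiAct G H ⥤ FintypeCat where
  obj Y := pairObj X Y
  map f := pairMapSnd X f
  map_id Y := by
    ext q
    induction q using Quot.ind
    rfl
  map_comp f g := by
    ext q
    induction q using Quot.ind
    rfl

/-- For a fixed biset `X` in `^H Fin_G`, the functor `X ×_{(H,G)} -` on `(^G Fin_H)^sep`. -/
noncomputable def pairFstFunctor (G H : Type) [Group G] [Group H] [Fintype G]
    (X : BiAct H G) : SepCat G H ⥤ FintypeCat :=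
  ObjectProperty.ι _ ⋙ ObjectProperty.ι _ ⋙ pairFstFunctorRaw X

/-- For a fixed biset `Y` in `^G Fin_H`, the functor `- ×_{(H,G)} Y` on `^H Fin_G`. -/
noncomputable def pairSndFunctor (G H : Type) [Group G] [Group H]
    (Y : BiAct G H) : BiFin H G ⥤ FintypeCat where
  obj X := pairObj X.obj Y
  map f := pairMapFst f.hom Y
  map_id X := by
    ext q
    induction q using Quot.ind
    rfl
  map_comp f g := by
    ext q
    induction q using Quot.ind
    rfl

variable (G H) [Fintype G] [Fintype H]

/-- The functor `(^G Fin_H)^sep ⟶ Fun_pce(^H Fin_G, Fin)` induced by the pairing. -/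
noncomputable def pairingPhi
    (h : ∀ Y : SepCat G H, PreservesPCE (pairSndFunctor G H Y.obj.obj)) :
    SepCat G H ⥤ FunPCE (BiFin H G) FintypeCat where
  obj Y := ⟨pairSndFunctor G H Y.obj.obj, h Y⟩
  map {Y Y'} f :=
    { hom :=
      { app := fun X => pairMapSnd X.obj f.hom.hom
        naturality := by
          intro X X' g
          ext q
          induction q using Quot.ind
          rfl } }
  map_id Y := by
    ext X q
    induction q using Quot.ind
    rfl
  map_comp f g := by
    ext X q
    induction q using Quot.ind
    rfl

/-- The functor `^H Fin_G ⟶ Fun_pce((^G Fin_H)^sep, Fin)` induced by the pairing. -/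
noncomputable def pairingPsi
    (h : ∀ X : BiFin H G, PreservesPCE (pairFstFunctor G H X.obj)) :
    BiFin H G ⥤ FunPCE (SepCat G H) FintypeCat where
  obj X := ⟨pairFstFunctor G H X.obj, h X⟩
  map {X X'} f :=
    { hom :=
      { app := fun Y => pairMapFst f.hom Y.obj.obj
        naturality := by
          intro Y Y' g
          ext q
          induction q using Quot.ind
          rfl } }
  map_id X := by
    ext Y q
    induction q using Quot.ind
    rfl
  map_comp f g := by
    ext Y q
    induction q using Quot.ind
    rfl

end Paper

namespace Paper

variable {G : Type} [Group G]

/-- The relation generating `S ×_G Y` for a right `G`-set `S` and a left `G`-set `Y`: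
`(s·g, y) ~ (s, g·y)`. -/
def gRel (S : ActCat Gᵐᵒᵖ) (Y : ActCat G) : S.V × Y.V → S.V × Y.V → Prop :=
  fun p q => ∃ g : G, p.1 = (S.ρ (op g)).hom q.1 ∧ q.2 = (Y.ρ g).hom p.2

/-- `S ×_G Y = (S × Y)/~`, with `~` generated by `(s·g, y) ~ (s, g·y)`. -/
def GPairSet (S : ActCat Gᵐᵒᵖ) (Y : ActCat G) : Type := Quot (gRel S Y)

instance (S : ActCat Gᵐᵒᵖ) (Y : ActCat G) : Finite (GPairSet S Y) :=
  Quot.finite _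

/-- `S ×_G Y` as an object of the category of finite sets. -/
noncomputable def gPairObj (S : ActCat Gᵐᵒᵖ) (Y : ActCat G) : FintypeCat :=
  letI := Fintype.ofFinite (GPairSet S Y)
  FintypeCat.of (GPairSet S Y)

/-- Functoriality of `S ×_G Y` in `S`. -/
noncomputable def gPairMapFst {S S' : ActCat Gᵐᵒᵖ} (f : S ⟶ S') (Y : ActCat G) :
    gPairObj S Y ⟶ gPairObj S' Y :=
  FintypeCat.homMk <| Quot.map (fun p => (f.hom p.1, p.2)) (by
    rintro ⟨s, y⟩ ⟨s', y'⟩ ⟨g, h1, h2⟩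
    refine ⟨g, ?_, h2⟩
    have := ConcreteCategory.congr_hom (f.comm (op g)) s'
    simp only [FintypeCat.comp_apply] at this
    dsimp only at h1 ⊢
    rw [h1]; exact this)

/-- Functoriality of `S ×_G Y` in `Y`. -/
noncomputable def gPairMapSnd (S : ActCat Gᵐᵒᵖ) {Y Y' : ActCat G} (f : Y ⟶ Y') :
    gPairObj S Y ⟶ gPairObj S Y' :=
  FintypeCat.homMk <| Quot.map (fun p => (p.1, f.hom p.2)) (by
    rintro ⟨s, y⟩ ⟨s', y'⟩ ⟨g, h1, h2⟩
    refine ⟨g, h1, ?_⟩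
    have := ConcreteCategory.congr_hom (f.comm g) y
    simp only [FintypeCat.comp_apply] at this
    dsimp only at h2 ⊢
    rw [h2]; exact this)

/-- For a fixed right `G`-set `S`, the functor `S ×_G - : ^G Fin → Fin`. -/
noncomputable def gPairFstFunctor (G : Type) [Group G] (S : ActCat Gᵐᵒᵖ) :
    FinFreeL G ⥤ FintypeCat where
  obj Y := gPairObj S Y.obj
  map f := gPairMapSnd S f.hom
  map_id Y := by
    ext q; induction q using Quot.ind; rfl
  map_comp f g := by
    ext q; induction q using Quot.ind; rfl

/-- For a fixed free left `G`-set `Y`, the functor `- ×_G Y : Fin_G → Fin`. -/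
noncomputable def gPairSndFunctor (G : Type) [Group G] (Y : ActCat G) :
    FinRight G ⥤ FintypeCat where
  obj S := gPairObj S Y
  map f := gPairMapFst f Y
  map_id S := by
    ext q; induction q using Quot.ind; rfl
  map_comp f g := by
    ext q; induction q using Quot.ind; rfl

/-- The functor `Fin_G ⟶ Fun_pce(^G Fin, Fin)` induced by the pairing `- ×_G -`. -/
noncomputable def gPairingFst (G : Type) [Group G]
    (h : ∀ S : FinRight G, PreservesPCE (gPairFstFunctor G S)) :
    FinRight G ⥤ FunPCE (FinFreeL G) FintypeCat where
  obj S := ⟨gPairFstFunctor G S, h S⟩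
  map {S S'} f :=
    { hom :=
      { app := fun Y => gPairMapFst f Y.obj
        naturality := by
          intro Y Y' g
          ext q; induction q using Quot.ind; rfl } }
  map_id S := by
    ext Y q; induction q using Quot.ind; rfl
  map_comp f g := by
    ext Y q; induction q using Quot.ind; rfl

/-- The functor `^G Fin ⟶ Fun_pce(Fin_G, Fin)` induced by the pairing `- ×_G -`. -/
noncomputable def gPairingSnd (G : Type) [Group G]
    (h : ∀ Y : FinFreeL G, PreservesPCE (gPairSndFunctor G Y.obj)) :
    FinFreeL G ⥤ FunPCE (FinRight G) FintypeCat where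
  obj Y := ⟨gPairSndFunctor G Y.obj, h Y⟩
  map {Y Y'} f :=
    { hom :=
      { app := fun S => gPairMapSnd S f.hom
        naturality := by
          intro S S' g
          ext q; induction q using Quot.ind; rfl } }
  map_id Y := by
    ext S q; induction q using Quot.ind; rfl
  map_comp f g := by
    ext S q; induction q using Quot.ind; rfl

instance endCoeFun (A : FintypeCat.{0}) : CoeFun (End A) (fun _ => A → A) := ⟨fun f => ((f : A ⟶ A).hom : A.obj → A.obj)⟩

section PP

/-! ### Generic helpers -/

/-- Bundle a finite type. -/
noncomputable def finOf (α : Type) [Finite α] : FintypeCat.{0} :=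
  letI := Fintype.ofFinite α
  FintypeCat.of α

section ActHelpers

variable {M : Type} [Monoid M]

lemma act_mul_apply (X : ActCat M) (a b : M) (x : X.V) :
    X.ρ (a * b) x = X.ρ a (X.ρ b x) := by
  rw [map_mul]; rfl

lemma act_one_apply (X : ActCat M) (x : X.V) : X.ρ (1 : M) x = x := by
  rw [map_one]; rfl

/-- Build an object of `ActCat M` from explicit data. -/
noncomputable def mkAct (α : Type) [Finite α] (ρ : M → α → α)
    (h1 : ∀ x, ρ 1 x = x) (hm : ∀ a b x, ρ (a * b) x = ρ a (ρ b x)) : ActCat M where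
  V := finOf α
  ρ :=
    { toFun := fun m => FintypeCat.homMk (ρ m : finOf α → finOf α)
      map_one' := by apply FintypeCat.hom_ext; intro x; exact h1 x
      map_mul' := by intro a b; apply FintypeCat.hom_ext; intro x; exact hm a b x }

@[simp] lemma mkAct_ρ (α : Type) [Finite α] (ρ : M → α → α) (h1) (hm) (m : M) (x : α) :
    (mkAct α ρ h1 hm).ρ m x = ρ m x := rfl

/-- Build a morphism of `ActCat M` from explicit data. -/
def mkHom {X Y : ActCat M} (f : X.V → Y.V) (hf : ∀ m x, f (X.ρ m x) = Y.ρ m (f x)) :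
    X ⟶ Y where
  hom := FintypeCat.homMk f
  comm := fun m => FintypeCat.hom_ext _ _ fun x => hf m x

@[simp] lemma mkHom_hom {X Y : ActCat M} (f) (hf) (x : X.V) :
    (mkHom (X := X) (Y := Y) f hf).hom x = f x := rfl

lemma hom_comm_apply {X Y : ActCat M} (f : X ⟶ Y) (m : M) (x : X.V) :
    f.hom (X.ρ m x) = Y.ρ m (f.hom x) := ConcreteCategory.congr_hom (f.comm m) x

lemma act_comp_hom_apply {X Y Z : ActCat M} (f : X ⟶ Y) (g : Y ⟶ Z) (x : X.V) :
    (f ≫ g).hom x = g.hom (f.hom x) := rfl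

end ActHelpers

/-! ### (Co)limit criteria in `FintypeCat` -/

section FintypeCrit

open WalkingCospan

lemma fin_iso_bijective {A B : FintypeCat.{0}} (e : A ≅ B) : Function.Bijective e.hom := by
  refine ⟨fun a b hab => ?_, fun b => ⟨e.inv b, ?_⟩⟩
  · have h1 : ∀ a, e.inv (e.hom a) = a := fun a => ConcreteCategory.congr_hom e.hom_inv_id a
    rw [← h1 a, hab, h1]
  · exact ConcreteCategory.congr_hom e.inv_hom_id b

lemma fintype_epi_iff_surjective {A B : FintypeCat.{0}} (f : A ⟶ B) :
    Epi f ↔ Function.Surjective f := by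
  classical
  constructor
  · intro hf
    by_contra hns
    obtain ⟨b0, hb0⟩ := not_forall.mp hns
    let u : B ⟶ FintypeCat.of Bool := FintypeCat.homMk fun b => if ∃ a, f a = b then true else false
    let v : B ⟶ FintypeCat.of Bool := FintypeCat.homMk fun _ => true
    have huv : f ≫ u = f ≫ v := FintypeCat.hom_ext _ _ fun a => by
      show (if ∃ a', f a' = f a then true else false) = true
      rw [if_pos ⟨a, rfl⟩]
    have := ConcreteCategory.congr_hom (hf.left_cancellation u v huv) b0
    change (if ∃ a, f a = b0 then true else false) = true at this
    rw [if_neg hb0] at this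
    exact Bool.false_ne_true this
  · intro hs
    refine ⟨fun u v huv => FintypeCat.hom_ext _ _ fun b => ?_⟩
    obtain ⟨a, rfl⟩ := hs b
    exact ConcreteCategory.congr_hom huv a

variable {Jd : Type} [Finite Jd]

/-- Canonical map for a cocone over a discrete diagram in `FintypeCat`. -/
def cofanMap (K : Discrete Jd ⥤ FintypeCat.{0}) (c : Cocone K) :
    (Σ j : Jd, K.obj ⟨j⟩) → c.pt := fun p => c.ι.app ⟨p.1⟩ p.2

noncomputable def isColimitOfBijective (K : Discrete Jd ⥤ FintypeCat.{0}) (c : Cocone K)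
    (h : Function.Bijective (cofanMap K c)) : IsColimit c where
  desc s := FintypeCat.homMk fun x => cofanMap K s ((Equiv.ofBijective _ h).symm x)
  fac s := by
    rintro ⟨j⟩
    refine FintypeCat.hom_ext _ _ fun y => ?_
    show cofanMap K s ((Equiv.ofBijective _ h).symm (cofanMap K c ⟨j, y⟩)) = s.ι.app ⟨j⟩ y
    rw [show cofanMap K c ⟨j, y⟩ = (Equiv.ofBijective _ h) ⟨j, y⟩ from rfl,
      Equiv.symm_apply_apply]
    rfl
  uniq s m w := by
    refine FintypeCat.hom_ext _ _ fun x => ?_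
    obtain ⟨p, rfl⟩ := h.2 x
    have h1 : m (cofanMap K c p) = s.ι.app ⟨p.1⟩ p.2 := ConcreteCategory.congr_hom (w ⟨p.1⟩) p.2
    show m (cofanMap K c p) = cofanMap K s ((Equiv.ofBijective _ h).symm (cofanMap K c p))
    rw [h1, show cofanMap K c p = (Equiv.ofBijective _ h) p from rfl, Equiv.symm_apply_apply]
    rfl

noncomputable def stdCofan (K : Discrete Jd ⥤ FintypeCat.{0}) : Cocone K where
  pt := finOf (Σ j : Jd, K.obj ⟨j⟩)
  ι := Discrete.natTrans fun j => FintypeCat.homMk (fun x => ⟨j.as, x⟩ : K.obj j → (Σ j' : Jd, K.obj ⟨j'⟩))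

lemma bijective_cofanMap_of_isColimit (K : Discrete Jd ⥤ FintypeCat.{0}) (c : Cocone K)
    (hc : IsColimit c) : Function.Bijective (cofanMap K c) := by
  have h0 : IsColimit (stdCofan K) :=
    isColimitOfBijective K _ (by exact Function.bijective_id)
  let e := h0.coconePointUniqueUpToIso hc
  have key : ∀ p, cofanMap K c p = e.hom (cofanMap K (stdCofan K) p) := fun p =>
    (ConcreteCategory.congr_hom (h0.comp_coconePointUniqueUpToIso_hom hc ⟨p.1⟩) p.2).symm
  rw [show cofanMap K c = fun p => e.hom (cofanMap K (stdCofan K) p) from funext key]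
  exact (fin_iso_bijective e).comp (by exact Function.bijective_id)

/-- The concrete pullback set of a walking-cospan diagram in `FintypeCat`. -/
def PbSet (K : WalkingCospan ⥤ FintypeCat.{0}) : Type :=
  {p : K.obj left × K.obj right // K.map Hom.inl p.1 = K.map Hom.inr p.2}

instance (K : WalkingCospan ⥤ FintypeCat.{0}) : Finite (PbSet K) :=
  Subtype.finite

/-- Canonical map for a cone over a walking-cospan diagram in `FintypeCat`. -/
def coneMap (K : WalkingCospan ⥤ FintypeCat.{0}) (c : Cone K) (x : c.pt) : PbSet K :=
  ⟨(c.π.app left x, c.π.app right x), by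
    have h1 : K.map Hom.inl (c.π.app left x) = c.π.app one x := ConcreteCategory.congr_hom (c.w Hom.inl) x
    have h2 : K.map Hom.inr (c.π.app right x) = c.π.app one x := ConcreteCategory.congr_hom (c.w Hom.inr) x
    exact h1.trans h2.symm⟩

noncomputable def isLimitOfBijective (K : WalkingCospan ⥤ FintypeCat.{0}) (c : Cone K)
    (h : Function.Bijective (coneMap K c)) : IsLimit c := by
  have hl : ∀ q : PbSet K, c.π.app left ((Equiv.ofBijective _ h).symm q) = q.1.1 := fun q =>
    congrArg (fun r : PbSet K => r.1.1) ((Equiv.ofBijective _ h).apply_symm_apply q)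
  have hr : ∀ q : PbSet K, c.π.app right ((Equiv.ofBijective _ h).symm q) = q.1.2 := fun q =>
    congrArg (fun r : PbSet K => r.1.2) ((Equiv.ofBijective _ h).apply_symm_apply q)
  have ho : ∀ q : PbSet K, c.π.app one ((Equiv.ofBijective _ h).symm q) =
      K.map Hom.inl q.1.1 := fun q =>
    (ConcreteCategory.congr_hom (c.w Hom.inl) ((Equiv.ofBijective _ h).symm q)).symm.trans
      (congrArg (K.map Hom.inl) (hl q))
  exact
  { lift := fun s => FintypeCat.homMk fun x => (Equiv.ofBijective _ h).symm (coneMap K s x)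
    fac := fun s j => by
      cases j with
      | none =>
        refine FintypeCat.hom_ext _ _ fun x => ?_
        show c.π.app one ((Equiv.ofBijective _ h).symm (coneMap K s x)) = s.π.app one x
        rw [ho]
        exact ConcreteCategory.congr_hom (s.w Hom.inl) x
      | some j =>
        cases j with
        | left =>
          refine FintypeCat.hom_ext _ _ fun x => ?_
          show c.π.app left ((Equiv.ofBijective _ h).symm (coneMap K s x)) = s.π.app left x
          rw [hl]; rfl
        | right =>
          refine FintypeCat.hom_ext _ _ fun x => ?_
          show c.π.app right ((Equiv.ofBijective _ h).symm (coneMap K s x)) = s.π.app right x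
          rw [hr]; rfl
    uniq := fun s m w => by
      refine FintypeCat.hom_ext _ _ fun x => ?_
      apply h.1
      apply Subtype.ext
      apply Prod.ext
      · show c.π.app left (m x) = c.π.app left ((Equiv.ofBijective _ h).symm (coneMap K s x))
        rw [hl]
        exact ConcreteCategory.congr_hom (w left) x
      · show c.π.app right (m x) = c.π.app right ((Equiv.ofBijective _ h).symm (coneMap K s x))
        rw [hr]
        exact ConcreteCategory.congr_hom (w right) x }

noncomputable def stdCone (K : WalkingCospan ⥤ FintypeCat.{0}) : Cone K where
  pt := finOf (PbSet K)
  π :=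
    { app := fun j => match j with
        | Option.none => FintypeCat.homMk (fun q => K.map Hom.inl q.1.1 : PbSet K → K.obj one)
        | Option.some WalkingPair.left => FintypeCat.homMk (fun q => q.1.1 : PbSet K → K.obj left)
        | Option.some WalkingPair.right => FintypeCat.homMk (fun q => q.1.2 : PbSet K → K.obj right)
      naturality := by
        rintro _ _ f
        change WidePullbackShape.Hom _ _ at f
        cases f with
        | id X => simp
        | term j =>
          cases j with
          | left =>
            simp only [Functor.const_obj_obj, Functor.const_obj_map, Category.id_comp]
            rfl
          | right =>
            simp only [Functor.const_obj_obj, Functor.const_obj_map, Category.id_comp]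
            refine FintypeCat.hom_ext _ _ fun q => ?_
            exact q.2 }

lemma bijective_coneMap_of_isLimit (K : WalkingCospan ⥤ FintypeCat.{0}) (c : Cone K)
    (hc : IsLimit c) : Function.Bijective (coneMap K c) := by
  have h0 : IsLimit (stdCone K) := isLimitOfBijective K _ (by exact Function.bijective_id)
  let e := hc.conePointUniqueUpToIso h0
  have key : ∀ x, coneMap K c x = coneMap K (stdCone K) (e.hom x) := by
    intro x
    apply Subtype.ext
    apply Prod.ext
    · exact (ConcreteCategory.congr_hom (hc.conePointUniqueUpToIso_hom_comp h0 left) x).symm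
    · exact (ConcreteCategory.congr_hom (hc.conePointUniqueUpToIso_hom_comp h0 right) x).symm
  rw [show coneMap K c = fun x => coneMap K (stdCone K) (e.hom x) from funext key]
  exact (by exact Function.bijective_id : Function.Bijective (coneMap K (stdCone K))).comp
    (fin_iso_bijective e)

end FintypeCrit

end PP
section PP2

open WalkingCospan

section ActLimits

variable {M : Type} [Monoid M]

lemma cone_w_apply {J : Type} [Category J] {K : J ⥤ ActCat M} (s : Cone K) {j j' : J}
    (f : j ⟶ j') (x : s.pt.V) :
    (K.map f).hom ((s.π.app j).hom x) = (s.π.app j').hom x :=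
  ConcreteCategory.congr_hom (congrArg Action.Hom.hom (s.w f)) x

lemma cocone_w_apply {J : Type} [Category J] {K : J ⥤ ActCat M} (s : Cocone K) {j j' : J}
    (f : j ⟶ j') (x : (K.obj j).V) :
    (s.ι.app j').hom ((K.map f).hom x) = (s.ι.app j).hom x :=
  ConcreteCategory.congr_hom (congrArg Action.Hom.hom (s.w f)) x

/-- The subtype carrier of the standard pullback in `ActCat M`. -/
def ActPbSet (K : WalkingCospan ⥤ ActCat M) : Type :=
  {p : (K.obj left).V × (K.obj right).V //
    (K.map Hom.inl).hom p.1 = (K.map Hom.inr).hom p.2}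

instance (K : WalkingCospan ⥤ ActCat M) : Finite (ActPbSet K) := Subtype.finite

noncomputable def actPb (K : WalkingCospan ⥤ ActCat M) : ActCat M :=
  mkAct (ActPbSet K)
    (fun m q => ⟨((K.obj left).ρ m q.1.1, (K.obj right).ρ m q.1.2), by
      rw [hom_comm_apply, hom_comm_apply, q.2]⟩)
    (fun q => by apply Subtype.ext; apply Prod.ext <;> simp [act_one_apply])
    (fun a b q => by apply Subtype.ext; apply Prod.ext <;> simp [act_mul_apply])

noncomputable def actPbCone (K : WalkingCospan ⥤ ActCat M) : Cone K where
  pt := actPb K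
  π :=
    { app := fun j => match j with
        | Option.none => mkHom (X := actPb K) (fun q => (K.map Hom.inl).hom q.1.1)
            (fun m q => hom_comm_apply (K.map Hom.inl) m q.1.1)
        | Option.some WalkingPair.left =>
            mkHom (X := actPb K) (fun q => q.1.1) (fun m q => rfl)
        | Option.some WalkingPair.right =>
            mkHom (X := actPb K) (fun q => q.1.2) (fun m q => rfl)
      naturality := by
        rintro _ _ f
        change WidePullbackShape.Hom _ _ at f
        cases f with
        | id X => simp
        | term j =>
          cases j with
          | left =>
            simp only [Functor.const_obj_obj, Functor.const_obj_map, Category.id_comp]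
            apply Action.hom_ext
            rfl
          | right =>
            simp only [Functor.const_obj_obj, Functor.const_obj_map, Category.id_comp]
            apply Action.hom_ext
            refine FintypeCat.hom_ext _ _ fun q => ?_
            exact q.2 }

noncomputable def actPbConeIsLimit (K : WalkingCospan ⥤ ActCat M) : IsLimit (actPbCone K) where
  lift s := mkHom (Y := actPb K)
    (fun x => ⟨((s.π.app left).hom x, (s.π.app right).hom x), by
      rw [cone_w_apply s Hom.inl, cone_w_apply s Hom.inr]⟩)
    (fun m x => by
      apply Subtype.ext
      apply Prod.ext
      · exact hom_comm_apply (s.π.app left) m x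
      · exact hom_comm_apply (s.π.app right) m x)
  fac s j := by
    cases j with
    | none =>
      apply Action.hom_ext
      refine FintypeCat.hom_ext _ _ fun x => ?_
      show (K.map Hom.inl).hom ((s.π.app left).hom x) = (s.π.app one).hom x
      exact cone_w_apply s Hom.inl x
    | some j =>
      cases j with
      | left => apply Action.hom_ext; rfl
      | right => apply Action.hom_ext; rfl
  uniq s m w := by
    apply Action.hom_ext
    refine FintypeCat.hom_ext _ _ fun x => ?_
    apply Subtype.ext
    apply Prod.ext
    · exact ConcreteCategory.congr_hom (congrArg Action.Hom.hom (w left)) x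
    · exact ConcreteCategory.congr_hom (congrArg Action.Hom.hom (w right)) x

variable {Jd : Type} [Finite Jd]

/-- The sigma carrier of the standard coproduct in `ActCat M`. -/
def ActSigma (K : Discrete Jd ⥤ ActCat M) : Type := Σ j : Jd, (K.obj ⟨j⟩).V

instance (K : Discrete Jd ⥤ ActCat M) : Finite (ActSigma K) := by
  unfold ActSigma; infer_instance

noncomputable def actSig (K : Discrete Jd ⥤ ActCat M) : ActCat M :=
  mkAct (ActSigma K) (fun m p => ⟨p.1, (K.obj ⟨p.1⟩).ρ m p.2⟩)
    (fun p => by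
      show (⟨p.1, (K.obj ⟨p.1⟩).ρ 1 p.2⟩ : ActSigma K) = p
      rw [act_one_apply]
      rfl)

    (fun a b p => by
      show (⟨p.1, (K.obj ⟨p.1⟩).ρ (a * b) p.2⟩ : ActSigma K) =
        ⟨p.1, (K.obj ⟨p.1⟩).ρ a ((K.obj ⟨p.1⟩).ρ b p.2)⟩
      rw [act_mul_apply])

noncomputable def actSigCocone (K : Discrete Jd ⥤ ActCat M) : Cocone K where
  pt := actSig K
  ι := Discrete.natTrans fun j =>
    mkHom (Y := actSig K) (fun x => ⟨j.as, x⟩) (fun m x => rfl)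

/-- Canonical map for a cocone over a discrete diagram in `ActCat M`. -/
def actCofanMap (K : Discrete Jd ⥤ ActCat M) (c : Cocone K) : ActSigma K → c.pt.V :=
  fun p => (c.ι.app ⟨p.1⟩).hom p.2

lemma actCofanMap_equivariant (K : Discrete Jd ⥤ ActCat M) (c : Cocone K) (m : M)
    (p : ActSigma K) :
    actCofanMap K c ((actSig K).ρ m p) = c.pt.ρ m (actCofanMap K c p) :=
  hom_comm_apply (c.ι.app ⟨p.1⟩) m p.2

noncomputable def actIsColimitOfBijective (K : Discrete Jd ⥤ ActCat M) (c : Cocone K)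
    (h : Function.Bijective (actCofanMap K c)) : IsColimit c := by
  have he : ∀ (m : M) (x : c.pt.V), (Equiv.ofBijective _ h).symm (c.pt.ρ m x) =
      (actSig K).ρ m ((Equiv.ofBijective _ h).symm x) := by
    intro m x
    apply (Equiv.ofBijective _ h).injective
    rw [Equiv.apply_symm_apply]
    exact ((actCofanMap_equivariant K c m ((Equiv.ofBijective _ h).symm x)).trans
      (congrArg (c.pt.ρ m)
        (show actCofanMap K c ((Equiv.ofBijective _ h).symm x) = x from
          (Equiv.ofBijective _ h).apply_symm_apply x))).symm
  exact
  { desc := fun s => mkHom (X := c.pt)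
      (fun x => actCofanMap K s ((Equiv.ofBijective _ h).symm x))
      (fun m x => by
        show actCofanMap K s ((Equiv.ofBijective _ h).symm (c.pt.ρ m x)) =
          s.pt.ρ m (actCofanMap K s ((Equiv.ofBijective _ h).symm x))
        rw [he, actCofanMap_equivariant])
    fac := fun s => by
      rintro ⟨j⟩
      apply Action.hom_ext
      refine FintypeCat.hom_ext _ _ fun y => ?_
      show actCofanMap K s ((Equiv.ofBijective _ h).symm (actCofanMap K c ⟨j, y⟩)) =
        (s.ι.app ⟨j⟩).hom y
      exact congrArg (actCofanMap K s)
        ((Equiv.ofBijective (actCofanMap K c) h).symm_apply_apply (⟨j, y⟩ : ActSigma K))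
    uniq := fun s m w => by
      apply Action.hom_ext
      refine FintypeCat.hom_ext _ _ fun x => ?_
      obtain ⟨p, rfl⟩ := h.2 x
      have h1 : m.hom (actCofanMap K c p) = (s.ι.app ⟨p.1⟩).hom p.2 :=
        ConcreteCategory.congr_hom (congrArg Action.Hom.hom (w ⟨p.1⟩)) p.2
      show m.hom (actCofanMap K c p) =
        actCofanMap K s ((Equiv.ofBijective _ h).symm (actCofanMap K c p))
      rw [h1, show actCofanMap K c p = (Equiv.ofBijective _ h) p from rfl,
        Equiv.symm_apply_apply]
      rfl }

/-- Surjective equivariant maps are epimorphisms. -/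
lemma act_epi_of_surjective {X Y : ActCat M} (f : X ⟶ Y)
    (hs : Function.Surjective f.hom) : Epi f :=
  ⟨fun u v huv => Action.hom_ext u v (FintypeCat.hom_ext _ _ fun y => by
    obtain ⟨x, rfl⟩ := hs y
    exact ConcreteCategory.congr_hom (congrArg Action.Hom.hom huv) x)⟩

end ActLimits

section ActEpi

variable {G' : Type} [Group G']

lemma act_epi_surjective {X Y : ActCat G'} (f : X ⟶ Y) (hf : Epi f) :
    Function.Surjective f.hom := by
  classical
  by_contra hns
  obtain ⟨y0, hy0⟩ := not_forall.mp hns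
  let Z : ActCat G' := mkAct Bool (fun _ b => b) (fun _ => rfl) (fun _ _ _ => rfl)
  have hrange : ∀ (m : G') (y : Y.V), (∃ x, f.hom x = Y.ρ m y) ↔ (∃ x, f.hom x = y) := by
    intro m y
    constructor
    · rintro ⟨x, hx⟩
      refine ⟨X.ρ m⁻¹ x, ?_⟩
      rw [hom_comm_apply, hx, ← act_mul_apply, inv_mul_cancel, act_one_apply]
    · rintro ⟨x, hx⟩
      exact ⟨X.ρ m x, by rw [hom_comm_apply, hx]⟩
  let u : Y ⟶ Z := mkHom (fun y => if ∃ x, f.hom x = y then true else false)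
    (fun m y => by
      show (if ∃ x, f.hom x = Y.ρ m y then true else false) = _
      simp only [hrange m y]
      rfl)
  let v : Y ⟶ Z := mkHom (fun _ => true) (fun _ _ => rfl)
  have huv : f ≫ u = f ≫ v := Action.hom_ext _ _ (FintypeCat.hom_ext _ _ fun x => by
    show (if ∃ x', f.hom x' = f.hom x then true else false) = true
    rw [if_pos ⟨x, rfl⟩])
  have := ConcreteCategory.congr_hom (congrArg Action.Hom.hom (hf.left_cancellation u v huv)) y0
  show False
  rw [show u.hom y0 = (if ∃ x, f.hom x = y0 then true else false) from rfl] at this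
  rw [if_neg hy0] at this
  exact Bool.false_ne_true this

end ActEpi

section FreeCat

variable {Jd : Type} [Finite Jd]

noncomputable def freePbCone (K : WalkingCospan ⥤ FinFreeL G) : Cone K where
  pt := ⟨actPb (K ⋙ ObjectProperty.ι _), by
    intro g q hq
    have h1 : (K.obj left).obj.ρ g q.1.1 = q.1.1 :=
      congrArg (fun r : ActPbSet (K ⋙ ObjectProperty.ι _) => r.1.1) hq
    exact (K.obj left).property g q.1.1 h1⟩
  π :=
    { app := fun j => ObjectProperty.homMk ((actPbCone (K ⋙ ObjectProperty.ι _)).π.app j)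
      naturality := fun _ _ f =>
        ObjectProperty.hom_ext _ ((actPbCone (K ⋙ ObjectProperty.ι _)).π.naturality f) }

noncomputable def freePbConeIsLimit (K : WalkingCospan ⥤ FinFreeL G) :
    IsLimit (freePbCone K) := by
  haveI := fullyFaithful_reflectsLimits
    (ObjectProperty.ι (fun X : ActCat G => ∀ (g : G) (x : X.V), (X.ρ g).hom x = x → g = 1))
  apply isLimitOfReflects (ObjectProperty.ι _)
  exact actPbConeIsLimit (K ⋙ ObjectProperty.ι _)

noncomputable def freeSigCocone (K : Discrete Jd ⥤ FinFreeL G) : Cocone K where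
  pt := ⟨actSig (K ⋙ ObjectProperty.ι _), by
    rintro g ⟨j, x⟩ hq
    exact (K.obj ⟨j⟩).property g x
      (@sigma_mk_injective Jd (fun j' => ((K ⋙ ObjectProperty.ι
        (fun X : ActCat G => ∀ (g : G) (x : X.V), (X.ρ g).hom x = x → g = 1)).obj ⟨j'⟩).V) j _ _ hq)⟩
  ι := Discrete.natTrans fun j => ObjectProperty.homMk ((actSigCocone (K ⋙ ObjectProperty.ι _)).ι.app j)

noncomputable def freeIsColimitOfBijective (K : Discrete Jd ⥤ FinFreeL G) (c : Cocone K)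
    (h : Function.Bijective (actCofanMap (K ⋙ ObjectProperty.ι _)
      ((ObjectProperty.ι _).mapCocone c))) : IsColimit c := by
  haveI := fullyFaithful_reflectsColimits
    (ObjectProperty.ι (fun X : ActCat G => ∀ (g : G) (x : X.V), (X.ρ g).hom x = x → g = 1))
  apply isColimitOfReflects (ObjectProperty.ι _)
  exact actIsColimitOfBijective (K ⋙ ObjectProperty.ι _) _ h

noncomputable def freeSigCoconeIsColimit (K : Discrete Jd ⥤ FinFreeL G) :
    IsColimit (freeSigCocone K) :=
  freeIsColimitOfBijective K _ (by exact Function.bijective_id)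

noncomputable def actSigCoconeIsColimit {M : Type} [Monoid M] (K : Discrete Jd ⥤ ActCat M) :
    IsColimit (actSigCocone K) :=
  actIsColimitOfBijective K _ (by exact Function.bijective_id)

lemma free_epi_of_surjective {X Y : FinFreeL G} (f : X ⟶ Y)
    (hs : Function.Surjective f.hom.hom) : Epi f :=
  ⟨fun u v huv => ObjectProperty.hom_ext _ (Action.hom_ext _ _ (FintypeCat.hom_ext _ _ fun y => by
    obtain ⟨x, rfl⟩ := hs y
    exact ConcreteCategory.congr_hom (congrArg (fun k => k.hom.hom) huv) x))⟩

lemma free_epi_surjective {X Y : FinFreeL G} (f : X ⟶ Y) (hf : Epi f) :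
    Function.Surjective f.hom.hom := by
  classical
  by_contra hns
  obtain ⟨y0, hy0⟩ := not_forall.mp hns
  let A := Y.obj
  let Z : FinFreeL G := ⟨mkAct (A.V ⊕ A.V) (fun g => Sum.map (A.ρ g) (A.ρ g))
      (fun x => by
        cases x with
        | inl y => show Sum.inl (A.ρ (1 : G) y) = Sum.inl y; rw [act_one_apply]
        | inr y => show Sum.inr (A.ρ (1 : G) y) = Sum.inr y; rw [act_one_apply])
      (fun a b x => by
        cases x with
        | inl y =>
          show Sum.inl (A.ρ (a * b) y) = Sum.inl (A.ρ a (A.ρ b y)); rw [act_mul_apply]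
        | inr y =>
          show Sum.inr (A.ρ (a * b) y) = Sum.inr (A.ρ a (A.ρ b y)); rw [act_mul_apply]), by
    intro g x hx
    cases x with
    | inl y => exact Y.property g y (Sum.inl_injective hx)
    | inr y => exact Y.property g y (Sum.inr_injective hx)⟩
  have hrange : ∀ (m : G) (y : A.V), (∃ x, f.hom.hom x = A.ρ m y) ↔ (∃ x, f.hom.hom x = y) := by
    intro m y
    constructor
    · rintro ⟨x, hx⟩
      refine ⟨X.obj.ρ m⁻¹ x, ?_⟩
      rw [hom_comm_apply, hx, ← act_mul_apply, inv_mul_cancel, act_one_apply]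
    · rintro ⟨x, hx⟩
      exact ⟨X.obj.ρ m x, by rw [hom_comm_apply, hx]⟩
  let u : Y ⟶ Z := ObjectProperty.homMk (mkHom (X := A) (Y := Z.obj) Sum.inl (fun m y => rfl))
  let v : Y ⟶ Z := ObjectProperty.homMk <| mkHom (X := A) (Y := Z.obj)
    (fun y => if ∃ x, f.hom.hom x = y then Sum.inl y else Sum.inr y)
    (fun m y => by
      show (if ∃ x, f.hom.hom x = A.ρ m y then Sum.inl (A.ρ m y) else Sum.inr (A.ρ m y)) = _
      simp only [hrange m y]
      by_cases hy : ∃ x, f.hom.hom x = y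
      · rw [if_pos hy]
        exact congrArg (Z.obj.ρ m) (if_pos (t := (Sum.inl y : A.V ⊕ A.V)) (e := Sum.inr y) hy).symm
      · rw [if_neg hy]
        exact congrArg (Z.obj.ρ m) (if_neg (t := (Sum.inl y : A.V ⊕ A.V)) (e := Sum.inr y) hy).symm)
  have huv : f ≫ u = f ≫ v := ObjectProperty.hom_ext _ <| Action.hom_ext _ _ (FintypeCat.hom_ext _ _ fun x => by
    show Sum.inl (f.hom.hom x) = (if ∃ x', f.hom.hom x' = f.hom.hom x then Sum.inl (f.hom.hom x)
      else Sum.inr (f.hom.hom x))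
    rw [if_pos ⟨x, rfl⟩])
  have := ConcreteCategory.congr_hom (congrArg (fun k => k.hom.hom) (hf.left_cancellation u v huv)) y0
  show False
  rw [show v.hom.hom y0 = (if ∃ x, f.hom.hom x = y0 then Sum.inl y0 else Sum.inr y0) from rfl] at this
  rw [if_neg hy0] at this
  exact Sum.inl_ne_inr (show (Sum.inl y0 : A.V ⊕ A.V) = Sum.inr y0 from this)

end FreeCat

end PP2
section PP3

open WalkingCospan

/-! ### API for `GPairSet` -/

lemma gRel_equivalence (S : ActCat Gᵐᵒᵖ) (Y : ActCat G) : Equivalence (gRel S Y) where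
  refl p := ⟨1, by rw [op_one, act_one_apply], by rw [act_one_apply]⟩
  symm := by
    rintro p q ⟨g, h1, h2⟩
    refine ⟨g⁻¹, ?_, ?_⟩
    · rw [h1, ← act_mul_apply, ← op_mul, mul_inv_cancel, op_one, act_one_apply]
    · rw [h2, ← act_mul_apply, inv_mul_cancel, act_one_apply]
  trans := by
    rintro p q r ⟨g, h1, h2⟩ ⟨k, h3, h4⟩
    refine ⟨k * g, ?_, ?_⟩
    · rw [h1, h3, ← act_mul_apply, ← op_mul]
    · rw [h4, h2, ← act_mul_apply]

/-- The class of a pair in `S ×_G Y`. -/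
def gmk (S : ActCat Gᵐᵒᵖ) (Y : ActCat G) (p : S.V × Y.V) : gPairObj S Y := Quot.mk _ p

lemma gmk_eq_iff {S : ActCat Gᵐᵒᵖ} {Y : ActCat G} {p q : S.V × Y.V} :
    gmk S Y p = gmk S Y q ↔ gRel S Y p q :=
  ⟨fun h => ((gRel_equivalence S Y).eqvGen_iff).mp (Quot.eqvGen_exact h),
   fun h => Quot.sound h⟩

lemma gmk_surjective (S : ActCat Gᵐᵒᵖ) (Y : ActCat G) : Function.Surjective (gmk S Y) :=
  fun x => Quot.exists_rep x

/-! ### The pairing preserves pullbacks, finite coproducts and epimorphisms -/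

lemma pce_snd (Y : FinFreeL G) : PreservesPCE (gPairSndFunctor G Y.obj) := by
  refine ⟨⟨?_⟩, fun J hJ => ?_, ?_⟩
  · -- pullbacks
    constructor
    intro K
    apply preservesLimit_of_preserves_limit_cone (actPbConeIsLimit K)
    apply isLimitOfBijective
    constructor
    · intro x x'
      obtain ⟨⟨q, y⟩, rfl⟩ := gmk_surjective _ _ x
      obtain ⟨⟨q', y'⟩, rfl⟩ := gmk_surjective _ _ x'
      intro hq
      have h1 : gmk (K.obj left) Y.obj (q.1.1, y) = gmk (K.obj left) Y.obj (q'.1.1, y') :=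
        congrArg (fun r : PbSet (K ⋙ gPairSndFunctor G Y.obj) => r.1.1) hq
      have h2 : gmk (K.obj right) Y.obj (q.1.2, y) = gmk (K.obj right) Y.obj (q'.1.2, y') :=
        congrArg (fun r : PbSet (K ⋙ gPairSndFunctor G Y.obj) => r.1.2) hq
      obtain ⟨g, hg1, hg2⟩ := gmk_eq_iff.mp h1
      obtain ⟨k, hk1, hk2⟩ := gmk_eq_iff.mp h2
      have hg1' : q.1.1 = (K.obj left).ρ (op g) q'.1.1 := hg1
      have hg2' : y' = Y.obj.ρ g y := hg2
      have hk1' : q.1.2 = (K.obj right).ρ (op k) q'.1.2 := hk1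
      have hk2' : y' = Y.obj.ρ k y := hk2
      have hfix : Y.obj.ρ (k⁻¹ * g) y = y := by
        rw [act_mul_apply, ← hg2', hk2', ← act_mul_apply, inv_mul_cancel, act_one_apply]
      obtain rfl : k = g := inv_mul_eq_one.mp (Y.property _ y hfix)
      refine gmk_eq_iff.mpr ⟨k, ?_, hg2'⟩
      show q = (actPb K).ρ (op k) q'
      apply Subtype.ext
      apply Prod.ext
      · exact hg1'
      · exact hk1'
    · rintro ⟨⟨a, b⟩, hab⟩
      obtain ⟨⟨s1, y⟩, rfl⟩ := gmk_surjective _ _ a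
      obtain ⟨⟨s2, y2⟩, rfl⟩ := gmk_surjective _ _ b
      have hab' : gmk (K.obj one) Y.obj ((K.map Hom.inl).hom s1, y) =
          gmk (K.obj one) Y.obj ((K.map Hom.inr).hom s2, y2) := hab
      obtain ⟨g, hg1, hg2⟩ := gmk_eq_iff.mp hab'
      have hg1' : (K.map Hom.inl).hom s1 = (K.obj one).ρ (op g) ((K.map Hom.inr).hom s2) := hg1
      have hg2' : y2 = Y.obj.ρ g y := hg2
      have hcond : (K.map Hom.inl).hom s1 = (K.map Hom.inr).hom ((K.obj right).ρ (op g) s2) := by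
        rw [hg1', hom_comm_apply]
      refine ⟨gmk (actPb K) Y.obj (⟨(s1, (K.obj right).ρ (op g) s2), hcond⟩, y), ?_⟩
      apply Subtype.ext
      apply Prod.ext
      · rfl
      · show gmk (K.obj right) Y.obj ((K.obj right).ρ (op g) s2, y) =
          gmk (K.obj right) Y.obj (s2, y2)
        exact gmk_eq_iff.mpr ⟨g, rfl, hg2'⟩
  · -- coproducts
    haveI := hJ
    refine ⟨?_⟩
    constructor
    intro K
    apply preservesColimit_of_preserves_colimit_cocone (actSigCoconeIsColimit K)
    apply isColimitOfBijective
    constructor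
    · rintro ⟨j, x⟩ ⟨j', x'⟩ h
      obtain ⟨⟨s, y⟩, rfl⟩ := gmk_surjective _ _ x
      obtain ⟨⟨s', y'⟩, rfl⟩ := gmk_surjective _ _ x'
      have h' : gmk (actSig K) Y.obj (⟨j, s⟩, y) = gmk (actSig K) Y.obj (⟨j', s'⟩, y') := h
      obtain ⟨g, hg1, hg2⟩ := gmk_eq_iff.mp h'
      have hg1' : (⟨j, s⟩ : ActSigma K) = ⟨j', (K.obj ⟨j'⟩).ρ (op g) s'⟩ := hg1
      have hg2' : y' = Y.obj.ρ g y := hg2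
      obtain rfl : j = j' := congrArg (fun r : ActSigma K => r.1) hg1'
      have hs : s = (K.obj ⟨j⟩).ρ (op g) s' :=
        @sigma_mk_injective _ (fun jj : J => ((K.obj ⟨jj⟩).V : Type)) j _ _ hg1'
      exact Sigma.mk.inj_iff.mpr ⟨rfl, heq_of_eq (gmk_eq_iff.mpr ⟨g, hs, hg2'⟩)⟩
    · intro x
      obtain ⟨⟨⟨j, s⟩, y⟩, rfl⟩ := gmk_surjective _ _ x
      exact ⟨⟨j, gmk (K.obj ⟨j⟩) Y.obj (s, y)⟩, rfl⟩
  · -- epimorphisms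
    refine ⟨fun f hf => ?_⟩
    rw [fintype_epi_iff_surjective]
    intro x
    obtain ⟨⟨s', y⟩, rfl⟩ := gmk_surjective _ _ x
    obtain ⟨s, rfl⟩ := act_epi_surjective f hf s'
    exact ⟨gmk _ _ (s, y), rfl⟩

lemma pce_fst (S : FinRight G) : PreservesPCE (gPairFstFunctor G S) := by
  refine ⟨⟨?_⟩, fun J hJ => ?_, ?_⟩
  · -- pullbacks
    constructor
    intro K
    apply preservesLimit_of_preserves_limit_cone (freePbConeIsLimit K)
    apply isLimitOfBijective
    constructor
    · intro x x'
      obtain ⟨⟨s, q⟩, rfl⟩ := gmk_surjective _ _ x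
      obtain ⟨⟨s', q'⟩, rfl⟩ := gmk_surjective _ _ x'
      intro hq
      have h1 : gmk S ((K ⋙ ObjectProperty.ι _).obj left) (s, q.1.1) =
          gmk S ((K ⋙ ObjectProperty.ι _).obj left) (s', q'.1.1) :=
        congrArg (fun r : PbSet (K ⋙ gPairFstFunctor G S) => r.1.1) hq
      have h2 : gmk S ((K ⋙ ObjectProperty.ι _).obj right) (s, q.1.2) =
          gmk S ((K ⋙ ObjectProperty.ι _).obj right) (s', q'.1.2) :=
        congrArg (fun r : PbSet (K ⋙ gPairFstFunctor G S) => r.1.2) hq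
      obtain ⟨g, hg1, hg2⟩ := gmk_eq_iff.mp h1
      obtain ⟨k, hk1, hk2⟩ := gmk_eq_iff.mp h2
      have hg1' : s = S.ρ (op g) s' := hg1
      have hg2' : q'.1.1 = ((K ⋙ ObjectProperty.ι _).obj left).ρ g q.1.1 := hg2
      have hk1' : s = S.ρ (op k) s' := hk1
      have hk2' : q'.1.2 = ((K ⋙ ObjectProperty.ι _).obj right).ρ k q.1.2 := hk2
      have hgz := calc
        ((K ⋙ ObjectProperty.ι _).obj one).ρ (k⁻¹ * g)
            (((K ⋙ ObjectProperty.ι _).map Hom.inl).hom q.1.1)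
            = ((K ⋙ ObjectProperty.ι _).obj one).ρ k⁻¹
              (((K ⋙ ObjectProperty.ι _).obj one).ρ g
              (((K ⋙ ObjectProperty.ι _).map Hom.inl).hom q.1.1)) :=
          act_mul_apply _ _ _ _
        _ = ((K ⋙ ObjectProperty.ι _).obj one).ρ k⁻¹
              (((K ⋙ ObjectProperty.ι _).map Hom.inl).hom
                (((K ⋙ ObjectProperty.ι _).obj left).ρ g q.1.1)) := by
          rw [hom_comm_apply]
        _ = ((K ⋙ ObjectProperty.ι _).obj one).ρ k⁻¹
              (((K ⋙ ObjectProperty.ι _).map Hom.inl).hom q'.1.1) := by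
          rw [hg2']
        _ = ((K ⋙ ObjectProperty.ι _).obj one).ρ k⁻¹
              (((K ⋙ ObjectProperty.ι _).map Hom.inr).hom q'.1.2) := by
          rw [q'.2]
        _ = ((K ⋙ ObjectProperty.ι _).obj one).ρ k⁻¹
              (((K ⋙ ObjectProperty.ι _).map Hom.inr).hom
                (((K ⋙ ObjectProperty.ι _).obj right).ρ k q.1.2)) := by
          rw [hk2']
        _ = ((K ⋙ ObjectProperty.ι _).obj one).ρ (k⁻¹ * k)
              (((K ⋙ ObjectProperty.ι _).map Hom.inr).hom q.1.2) := by
          rw [act_mul_apply, hom_comm_apply]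
        _ = ((K ⋙ ObjectProperty.ι _).map Hom.inl).hom q.1.1 := by
          rw [inv_mul_cancel, act_one_apply, q.2]
      obtain rfl : k = g := inv_mul_eq_one.mp ((K.obj one).property (k⁻¹ * g) _ hgz)
      refine gmk_eq_iff.mpr ⟨k, hg1', ?_⟩
      show q' = (actPb (K ⋙ ObjectProperty.ι _)).ρ k q
      apply Subtype.ext
      apply Prod.ext
      · exact hg2'
      · exact hk2'
    · rintro ⟨⟨a, b⟩, hab⟩
      obtain ⟨⟨s, y1⟩, rfl⟩ := gmk_surjective _ _ a
      obtain ⟨⟨s2, y2⟩, rfl⟩ := gmk_surjective _ _ b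
      have hab' : gmk S ((K ⋙ ObjectProperty.ι _).obj one)
            (s, ((K ⋙ ObjectProperty.ι _).map Hom.inl).hom y1) =
          gmk S ((K ⋙ ObjectProperty.ι _).obj one)
            (s2, ((K ⋙ ObjectProperty.ι _).map Hom.inr).hom y2) := hab
      obtain ⟨g, hg1, hg2⟩ := gmk_eq_iff.mp hab'
      have hg1' : s = S.ρ (op g) s2 := hg1
      have hg2' : ((K ⋙ ObjectProperty.ι _).map Hom.inr).hom y2 =
          ((K ⋙ ObjectProperty.ι _).obj one).ρ g
            (((K ⋙ ObjectProperty.ι _).map Hom.inl).hom y1) := hg2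
      have hcond : ((K ⋙ ObjectProperty.ι _).map Hom.inl).hom
            (((K ⋙ ObjectProperty.ι _).obj left).ρ g y1) =
          ((K ⋙ ObjectProperty.ι _).map Hom.inr).hom y2 := by
        rw [hom_comm_apply, ← hg2']
      refine ⟨gmk S (actPb (K ⋙ ObjectProperty.ι _))
        (s2, ⟨(((K ⋙ ObjectProperty.ι _).obj left).ρ g y1, y2), hcond⟩), ?_⟩
      apply Subtype.ext
      apply Prod.ext
      · show gmk S ((K ⋙ ObjectProperty.ι _).obj left)
            (s2, ((K ⋙ ObjectProperty.ι _).obj left).ρ g y1) =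
          gmk S ((K ⋙ ObjectProperty.ι _).obj left) (s, y1)
        exact (gmk_eq_iff.mpr ⟨g, hg1', rfl⟩).symm
      · rfl
  · -- coproducts
    haveI := hJ
    refine ⟨?_⟩
    constructor
    intro K
    apply preservesColimit_of_preserves_colimit_cocone (freeSigCoconeIsColimit K)
    apply isColimitOfBijective
    constructor
    · rintro ⟨j, x⟩ ⟨j', x'⟩ h
      obtain ⟨⟨s, y⟩, rfl⟩ := gmk_surjective _ _ x
      obtain ⟨⟨s', y'⟩, rfl⟩ := gmk_surjective _ _ x'
      have h' : gmk S (actSig (K ⋙ ObjectProperty.ι _)) (s, ⟨j, y⟩) =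
          gmk S (actSig (K ⋙ ObjectProperty.ι _)) (s', ⟨j', y'⟩) := h
      obtain ⟨g, hg1, hg2⟩ := gmk_eq_iff.mp h'
      have hg1' : s = S.ρ (op g) s' := hg1
      have hg2' : (⟨j', y'⟩ : ActSigma (K ⋙ ObjectProperty.ι _)) =
          ⟨j, ((K ⋙ ObjectProperty.ι _).obj ⟨j⟩).ρ g y⟩ := hg2
      obtain rfl : j = j' :=
        (congrArg (fun r : ActSigma (K ⋙ ObjectProperty.ι _) => r.1) hg2').symm
      have hy : y' = ((K ⋙ ObjectProperty.ι _).obj ⟨j⟩).ρ g y :=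
        @sigma_mk_injective _
          (fun jj : J => (((K ⋙ ObjectProperty.ι
            (fun X : ActCat G => ∀ (g : G) (x : X.V), (X.ρ g).hom x = x → g = 1)).obj ⟨jj⟩).V : Type))
          j _ _ hg2'
      exact Sigma.mk.inj_iff.mpr ⟨rfl, heq_of_eq (gmk_eq_iff.mpr ⟨g, hg1', hy⟩)⟩
    · intro x
      obtain ⟨⟨s, ⟨j, y⟩⟩, rfl⟩ := gmk_surjective _ _ x
      exact ⟨⟨j, gmk S (K.obj ⟨j⟩).obj (s, y)⟩, rfl⟩
  · -- epimorphisms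
    refine ⟨fun f hf => ?_⟩
    rw [fintype_epi_iff_surjective]
    intro x
    obtain ⟨⟨s, y'⟩, rfl⟩ := gmk_surjective _ _ x
    obtain ⟨y, rfl⟩ := free_epi_surjective f hf y'
    exact ⟨gmk _ _ (s, y), rfl⟩

end PP3
section PP4

/-! ### The regular objects -/

variable [Finite G]

noncomputable def rReg : FinRight G :=
  mkAct G (fun m a => a * m.unop)
    (fun a => by show a * (1 : Gᵐᵒᵖ).unop = a; rw [unop_one, mul_one])
    (fun m n a => by
      show a * (m * n).unop = (a * n.unop) * m.unop
      rw [unop_mul, ← mul_assoc])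

noncomputable def lReg : FinFreeL G :=
  ⟨mkAct G (fun g a => g * a) (fun a => one_mul a) (fun a b x => mul_assoc a b x),
   fun g (a : G) h => mul_eq_right.mp h⟩

/-- Left multiplication, as a morphism of right `G`-sets on `rReg`. -/
noncomputable def lMul (g : G) : (rReg : FinRight G) ⟶ rReg :=
  mkHom (fun a : G => g * a) (fun m (a : G) => (mul_assoc g a m.unop).symm)

lemma lMul_one : lMul (1 : G) = 𝟙 (rReg : FinRight G) :=
  Action.hom_ext _ _ (FintypeCat.hom_ext _ _ fun a : G => one_mul a)

lemma lMul_mul (g h : G) : lMul (g * h) = (lMul h ≫ lMul g : (rReg : FinRight G) ⟶ rReg) :=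
  Action.hom_ext _ _ (FintypeCat.hom_ext _ _ fun a : G => mul_assoc g h a)

/-- Right multiplication, as a morphism of left `G`-sets on `lReg`. -/
noncomputable def rMul (g : G) : (lReg : FinFreeL G) ⟶ lReg :=
  ObjectProperty.homMk (mkHom (fun a : G => a * g) (fun m (a : G) => mul_assoc m a g))

lemma rMul_one : rMul (1 : G) = 𝟙 (lReg : FinFreeL G) :=
  ObjectProperty.hom_ext _ (Action.hom_ext _ _ (FintypeCat.hom_ext _ _ fun a : G => mul_one a))

lemma rMul_mul (g h : G) : rMul (g * h) = (rMul g ≫ rMul h : (lReg : FinFreeL G) ⟶ lReg) :=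
  ObjectProperty.hom_ext _ (Action.hom_ext _ _ (FintypeCat.hom_ext _ _ fun a : G => (mul_assoc a g h).symm))

/-- The orbit map of `s`, as a morphism `rReg ⟶ S`. -/
noncomputable def sigmaHom (S : FinRight G) (s : S.V) : (rReg : FinRight G) ⟶ S :=
  mkHom (fun a : G => S.ρ (op a) s) (fun m (a : G) => by
    show S.ρ (op (a * m.unop)) s = S.ρ m (S.ρ (op a) s)
    rw [op_mul, op_unop, act_mul_apply])

/-- The orbit map of `y`, as a morphism `lReg ⟶ Y`. -/
noncomputable def muHom (Y : FinFreeL G) (y : Y.obj.V) : (lReg : FinFreeL G) ⟶ Y :=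
  ObjectProperty.homMk <| mkHom (X := (lReg (G := G)).obj) (Y := Y.obj) (fun a : G => Y.obj.ρ a y)
    (fun m (a : G) => act_mul_apply Y.obj m a y)

lemma sigmaHom_comp {S S' : FinRight G} (f : S ⟶ S') (s : S.V) :
    sigmaHom S s ≫ f = sigmaHom S' (f.hom s) :=
  Action.hom_ext _ _ (FintypeCat.hom_ext _ _ fun a : G => hom_comm_apply f (op a) s)

lemma lMul_comp_sigmaHom (S : FinRight G) (s : S.V) (g : G) :
    lMul g ≫ sigmaHom S s = sigmaHom S (S.ρ (op g) s) :=
  Action.hom_ext _ _ (FintypeCat.hom_ext _ _ fun a : G => by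
    show S.ρ (op (g * a)) s = S.ρ (op a) (S.ρ (op g) s)
    rw [op_mul, act_mul_apply])

lemma muHom_comp {Y Y' : FinFreeL G} (f : Y ⟶ Y') (y : Y.obj.V) :
    muHom Y y ≫ f = muHom Y' (f.hom.hom y) :=
  ObjectProperty.hom_ext _ (Action.hom_ext _ _ (FintypeCat.hom_ext _ _ fun a : G => hom_comm_apply f.hom a y))

lemma rMul_comp_muHom (Y : FinFreeL G) (y : Y.obj.V) (g : G) :
    rMul g ≫ muHom Y y = muHom Y (Y.obj.ρ g y) :=
  ObjectProperty.hom_ext _ (Action.hom_ext _ _ (FintypeCat.hom_ext _ _ fun a : G => by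
    show Y.obj.ρ (a * g) y = Y.obj.ρ a (Y.obj.ρ g y)
    rw [act_mul_apply]))

/-! ### `betaSnd` : `rReg ×_G Y' ≃ Y'` and `betaFst` : `S' ×_G lReg ≃ S'` -/

lemma act_op_mul (S' : ActCat Gᵐᵒᵖ) (g a : G) (s : S'.V) :
    S'.ρ (op (g * a)) s = S'.ρ (op a) (S'.ρ (op g) s) := by
  rw [op_mul, act_mul_apply]

lemma act_op_mul' (S' : ActCat Gᵐᵒᵖ) (a g : G) (s : S'.V) :
    S'.ρ (op (a * g)) s = S'.ρ (op g) (S'.ρ (op a) s) := by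
  rw [op_mul, act_mul_apply]

def betaSnd (Y' : ActCat G) : gPairObj (rReg : FinRight G) Y' → Y'.V :=
  Quot.lift (fun p => Y'.ρ p.1 p.2) (by
    rintro ⟨a, y⟩ ⟨b, y'⟩ ⟨g, h1, h2⟩
    show Y'.ρ a y = Y'.ρ b y'
    have h1' : a = (rReg : FinRight G).ρ (op g) b := h1
    have h2' : y' = Y'.ρ g y := h2
    rw [h1', h2']
    exact act_mul_apply Y' b g y)

def betaFst (S' : FinRight G) : gPairObj S' (lReg (G := G)).obj → S'.V :=
  Quot.lift (fun p => S'.ρ (op p.2) p.1) (by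
    rintro ⟨s, a⟩ ⟨s', b⟩ ⟨g, h1, h2⟩
    show S'.ρ (op a) s = S'.ρ (op b) s'
    have h1' : s = S'.ρ (op g) s' := h1
    have h2' : b = (lReg (G := G)).obj.ρ g a := h2
    rw [h1', h2']
    exact (act_op_mul S' g a s').symm)

lemma gmk_shift (S : FinRight G) (Y' : ActCat G) (s : S.V) (a : G) (y : Y'.V) :
    gmk S Y' (S.ρ (op a) s, y) = gmk S Y' (s, Y'.ρ a y) :=
  gmk_eq_iff.mpr ⟨a, rfl, rfl⟩

/-! ### Faithfulness and fullness of `gPairingSnd` -/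

lemma gPairingSnd_faithful : (gPairingSnd G pce_snd).Faithful := by
  refine ⟨fun {Y Y'} {f f'} hff => ?_⟩
  apply ObjectProperty.hom_ext
  apply Action.hom_ext
  refine FintypeCat.hom_ext _ _ fun y => ?_
  have h1 : gmk (rReg : FinRight G) Y'.obj ((1 : G), f.hom.hom y) =
      gmk (rReg : FinRight G) Y'.obj ((1 : G), f'.hom.hom y) :=
    congrArg (fun η : ((gPairingSnd G pce_snd).obj Y) ⟶ ((gPairingSnd G pce_snd).obj Y') =>
      η.hom.app (rReg : FinRight G) (gmk (rReg : FinRight G) Y.obj ((1 : G), y))) hff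
  obtain ⟨g, hg1, hg2⟩ := gmk_eq_iff.mp h1
  have hg1' : (1 : G) = 1 * g := hg1
  have hg2' : f'.hom.hom y = Y'.obj.ρ g (f.hom.hom y) := hg2
  rw [one_mul] at hg1'
  rw [← hg1', act_one_apply] at hg2'
  exact hg2'.symm

lemma gPairingSnd_full : (gPairingSnd G pce_snd).Full := by
  refine ⟨fun {Y Y'} η => ?_⟩
  let e : Y.obj.V → Y'.obj.V := fun y =>
    betaSnd Y'.obj (η.hom.app (rReg : FinRight G) (gmk (rReg : FinRight G) Y.obj ((1 : G), y)))
  have hbeta : ∀ (g : G) (t : gPairObj (rReg : FinRight G) Y'.obj),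
      betaSnd Y'.obj (gPairMapFst (lMul g) Y'.obj t) = Y'.obj.ρ g (betaSnd Y'.obj t) := by
    intro g t
    induction t using Quot.ind with
    | _ p => exact act_mul_apply Y'.obj g p.1 p.2
  have heq : ∀ (g : G) (y : Y.obj.V), e (Y.obj.ρ g y) = Y'.obj.ρ g (e y) := by
    intro g y
    have step1 : gmk (rReg : FinRight G) Y.obj ((1 : G), Y.obj.ρ g y) =
        gmk (rReg : FinRight G) Y.obj ((g : G), y) :=
      gmk_eq_iff.mpr ⟨g⁻¹, (mul_inv_cancel g).symm,
        by rw [← act_mul_apply, inv_mul_cancel, act_one_apply]⟩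
    have step2 : gmk (rReg : FinRight G) Y.obj ((g : G), y) =
        gPairMapFst (lMul g) Y.obj (gmk (rReg : FinRight G) Y.obj ((1 : G), y)) :=
      congrArg (fun a : G => gmk (rReg : FinRight G) Y.obj ((a : G), y)) (mul_one g).symm
    have step3 : η.hom.app (rReg : FinRight G)
          (gPairMapFst (lMul g) Y.obj (gmk (rReg : FinRight G) Y.obj ((1 : G), y))) =
        gPairMapFst (lMul g) Y'.obj
          (η.hom.app (rReg : FinRight G) (gmk (rReg : FinRight G) Y.obj ((1 : G), y))) :=
      ConcreteCategory.congr_hom (η.hom.naturality (lMul g)) (gmk (rReg : FinRight G) Y.obj ((1 : G), y))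
    show betaSnd Y'.obj
        (η.hom.app (rReg : FinRight G) (gmk (rReg : FinRight G) Y.obj ((1 : G), Y.obj.ρ g y))) = _
    rw [step1, step2, step3]
    exact hbeta g _
  refine ⟨ObjectProperty.homMk (mkHom (X := Y.obj) (Y := Y'.obj) e heq), ?_⟩
  apply ObjectProperty.hom_ext
  apply NatTrans.ext
  funext S
  refine FintypeCat.hom_ext _ _ fun x => ?_
  obtain ⟨⟨s, y⟩, rfl⟩ := gmk_surjective _ _ x
  have h0 : S.ρ (op (1 : G)) s = s := by rw [op_one, act_one_apply]
  have hset : gmk S Y.obj (s, y) =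
      gPairMapFst (sigmaHom S s) Y.obj (gmk (rReg : FinRight G) Y.obj ((1 : G), y)) :=
    congrArg (fun t => gmk S Y.obj (t, y)) h0.symm
  have hstep : η.hom.app S
        (gPairMapFst (sigmaHom S s) Y.obj (gmk (rReg : FinRight G) Y.obj ((1 : G), y))) =
      gPairMapFst (sigmaHom S s) Y'.obj
        (η.hom.app (rReg : FinRight G) (gmk (rReg : FinRight G) Y.obj ((1 : G), y))) :=
    ConcreteCategory.congr_hom (η.hom.naturality (sigmaHom S s)) (gmk (rReg : FinRight G) Y.obj ((1 : G), y))
  obtain ⟨⟨a, y''⟩, ht⟩ :=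
    gmk_surjective _ _ (η.hom.app (rReg : FinRight G) (gmk (rReg : FinRight G) Y.obj ((1 : G), y)))
  have h4 : η.hom.app S (gmk S Y.obj (s, y)) = gmk S Y'.obj (S.ρ (op (a : G)) s, y'') := by
    rw [hset, hstep, ← ht]
    rfl
  have hev : e y = Y'.obj.ρ (a : G) y'' := by
    show betaSnd Y'.obj
      (η.hom.app (rReg : FinRight G) (gmk (rReg : FinRight G) Y.obj ((1 : G), y))) = _
    rw [← ht]
    rfl
  show gmk S Y'.obj (s, e y) = η.hom.app S (gmk S Y.obj (s, y))
  rw [h4, hev]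
  exact (gmk_shift S Y'.obj s a y'').symm

/-! ### Faithfulness and fullness of `gPairingFst` -/

lemma gPairingFst_faithful : (gPairingFst G pce_fst).Faithful := by
  refine ⟨fun {S S'} {f f'} hff => ?_⟩
  apply Action.hom_ext
  refine FintypeCat.hom_ext _ _ fun s => ?_
  have h1 : gmk S' (lReg (G := G)).obj (f.hom s, (1 : G)) =
      gmk S' (lReg (G := G)).obj (f'.hom s, (1 : G)) :=
    congrArg (fun η : ((gPairingFst G pce_fst).obj S) ⟶ ((gPairingFst G pce_fst).obj S') =>
      η.hom.app (lReg : FinFreeL G) (gmk S (lReg (G := G)).obj (s, (1 : G)))) hff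
  obtain ⟨g, hg1, hg2⟩ := gmk_eq_iff.mp h1
  have hg1' : f.hom s = S'.ρ (op g) (f'.hom s) := hg1
  have hg2' : (1 : G) = g * 1 := hg2
  rw [mul_one] at hg2'
  rw [← hg2', op_one, act_one_apply] at hg1'
  exact hg1'

lemma gPairingFst_full : (gPairingFst G pce_fst).Full := by
  refine ⟨fun {S S'} η => ?_⟩
  let e : S.V → S'.V := fun s =>
    betaFst S' (η.hom.app (lReg : FinFreeL G) (gmk S (lReg (G := G)).obj (s, (1 : G))))
  have hbeta : ∀ (g : G) (t : gPairObj S' (lReg (G := G)).obj),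
      betaFst S' (gPairMapSnd S' (rMul g).hom t) = S'.ρ (op g) (betaFst S' t) := by
    intro g t
    induction t using Quot.ind with
    | _ p => exact act_op_mul' S' p.2 g p.1
  have heq : ∀ (m : Gᵐᵒᵖ) (s : S.V), e (S.ρ m s) = S'.ρ m (e s) := by
    intro m s
    have step1 : gmk S (lReg (G := G)).obj (S.ρ m s, (1 : G)) =
        gmk S (lReg (G := G)).obj (s, (m.unop : G)) := by
      exact gmk_eq_iff.mpr ⟨m.unop, by rw [op_unop], (mul_one m.unop).symm⟩
    have step2 : gmk S (lReg (G := G)).obj (s, (m.unop : G)) =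
        gPairMapSnd S (rMul m.unop).hom (gmk S (lReg (G := G)).obj (s, (1 : G))) :=
      congrArg (fun a : G => gmk S (lReg (G := G)).obj (s, (a : G))) (one_mul m.unop).symm
    have step3 : η.hom.app (lReg : FinFreeL G)
          (gPairMapSnd S (rMul m.unop).hom (gmk S (lReg (G := G)).obj (s, (1 : G)))) =
        gPairMapSnd S' (rMul m.unop).hom
          (η.hom.app (lReg : FinFreeL G) (gmk S (lReg (G := G)).obj (s, (1 : G)))) :=
      ConcreteCategory.congr_hom (η.hom.naturality (rMul m.unop)) (gmk S (lReg (G := G)).obj (s, (1 : G)))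
    show betaFst S'
        (η.hom.app (lReg : FinFreeL G) (gmk S (lReg (G := G)).obj (S.ρ m s, (1 : G)))) = _
    rw [step1, step2, step3]
    exact (hbeta m.unop _).trans (by rw [op_unop])
  refine ⟨mkHom (X := S) (Y := S') e heq, ?_⟩
  apply ObjectProperty.hom_ext
  apply NatTrans.ext
  funext Y
  refine FintypeCat.hom_ext _ _ fun x => ?_
  obtain ⟨⟨s, y⟩, rfl⟩ := gmk_surjective _ _ x
  have hset : gmk S Y.obj (s, y) =
      gPairMapSnd S (muHom Y y).hom (gmk S (lReg (G := G)).obj (s, (1 : G))) :=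
    congrArg (fun t => gmk S Y.obj (s, t)) (act_one_apply Y.obj y).symm
  have hstep : η.hom.app Y
        (gPairMapSnd S (muHom Y y).hom (gmk S (lReg (G := G)).obj (s, (1 : G)))) =
      gPairMapSnd S' (muHom Y y).hom
        (η.hom.app (lReg : FinFreeL G) (gmk S (lReg (G := G)).obj (s, (1 : G)))) :=
    ConcreteCategory.congr_hom (η.hom.naturality (muHom Y y)) (gmk S (lReg (G := G)).obj (s, (1 : G)))
  obtain ⟨⟨s'', a⟩, ht⟩ :=
    gmk_surjective _ _ (η.hom.app (lReg : FinFreeL G) (gmk S (lReg (G := G)).obj (s, (1 : G))))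
  have h4 : η.hom.app Y (gmk S Y.obj (s, y)) = gmk S' Y.obj (s'', Y.obj.ρ (a : G) y) := by
    rw [hset, hstep, ← ht]
    rfl
  have hev : e s = S'.ρ (op (a : G)) s'' := by
    show betaFst S'
      (η.hom.app (lReg : FinFreeL G) (gmk S (lReg (G := G)).obj (s, (1 : G)))) = _
    rw [← ht]
    rfl
  show gmk S' Y.obj (e s, y) = η.hom.app Y (gmk S Y.obj (s, y))
  rw [h4, hev]
  exact gmk_shift S' Y.obj s'' a y

end PP4
section PP5

open WalkingCospan

variable [Finite G]

/-- `b * a⁻¹`, packaged to avoid elaboration issues with coerced carriers. -/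
def divG (b a : G) : G := b * a⁻¹

lemma act_op_mul_unop (S : ActCat Gᵐᵒᵖ) (m : Gᵐᵒᵖ) (a : G) (s : S.V) :
    S.ρ (op (a * m.unop)) s = S.ρ m (S.ρ (op a) s) := by
  rw [op_mul, op_unop, act_mul_apply]

lemma div_prop (S : ActCat Gᵐᵒᵖ) (s t : S.V) (a b : G)
    (h : S.ρ (op a) s = S.ρ (op b) t) : S.ρ (op (divG b a)) t = s := by
  show S.ρ (op (b * a⁻¹)) t = s
  rw [op_mul, act_mul_apply, ← h, ← act_mul_apply, ← op_mul, mul_inv_cancel, op_one,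
    act_one_apply]

lemma divG_mul (c a : G) : divG (c * a) a = c := mul_inv_cancel_right c a

lemma divG_cancel (b a : G) : divG b a * a = b := inv_mul_cancel_right b a

lemma map_comp_apply {C : Type*} [Category C] (F : C ⥤ FintypeCat.{0}) {X Y Z : C}
    (f : X ⟶ Y) (g : Y ⟶ Z) (x : F.obj X) : F.map (f ≫ g) x = F.map g (F.map f x) :=
  ConcreteCategory.congr_hom (F.map_comp f g) x

lemma gPairingSnd_essSurj : (gPairingSnd G pce_snd).EssSurj := by
  constructor
  rintro ⟨F, hF⟩
  obtain ⟨hpb⟩ := hF.1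
  obtain ⟨hcpG⟩ := hF.2.1 G
  haveI := hpb
  haveI := hcpG
  haveI := hF.2.2
  set R : FinRight G := rReg with hR
  -- the left action of `G` on `F.obj rReg`
  let FR : Type := F.obj R
  let ρY : G → FR → FR := fun g u => F.map (lMul g) u
  have ρY1 : ∀ u, ρY 1 u = u := fun u => by
    show F.map (lMul (1 : G)) u = u
    rw [lMul_one, F.map_id]
    rfl
  have ρYm : ∀ g h u, ρY (g * h) u = ρY g (ρY h u) := fun g h u => by
    show F.map (lMul (g * h)) u = F.map (lMul g) (F.map (lMul h) u)
    rw [lMul_mul, F.map_comp]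
    rfl
  let Y0 : ActCat G := mkAct FR ρY ρY1 ρYm
  -- the pullback `rReg ×_pt rReg` and its coproduct decomposition
  let pt1 : FinRight G := mkAct PUnit (fun _ x => x) (fun _ => rfl) (fun _ _ _ => rfl)
  let cpt : R ⟶ pt1 := mkHom (fun _ => PUnit.unit) (fun _ _ => rfl)
  let K2 : WalkingCospan ⥤ FinRight G := cospan cpt cpt
  let κ2 : G → (R ⟶ actPb K2) := fun c => mkHom
    (fun a : G => ⟨(a, c * a), rfl⟩)
    (fun m (a : G) => by
      apply Subtype.ext
      apply Prod.ext
      · rfl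
      · exact (mul_assoc c a m.unop).symm)
  let Kd2 : Discrete G ⥤ FinRight G := Discrete.functor (fun _ => R)
  let cc2 : Cocone Kd2 := { pt := actPb K2, ι := Discrete.natTrans (fun c => κ2 c.as) }
  have hbij2 : Function.Bijective (actCofanMap Kd2 cc2) := by
    apply Function.bijective_iff_has_inverse.mpr
    refine ⟨fun q => ⟨divG (G := G) q.1.2 q.1.1, q.1.1⟩, ?_, ?_⟩
    · rintro ⟨c, a⟩
      refine Sigma.mk.inj_iff.mpr ⟨?_, HEq.rfl⟩
      exact divG_mul (G := G) c a
    · rintro ⟨⟨a, b⟩, hcond⟩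
      apply Subtype.ext
      apply Prod.ext
      · rfl
      · exact divG_cancel (G := G) b a
  have hκl : ∀ c : G, κ2 c ≫ (actPbCone K2).π.app left = 𝟙 R :=
    fun c => Action.hom_ext _ _ rfl
  have hκr : ∀ c : G, κ2 c ≫ (actPbCone K2).π.app right = lMul c :=
    fun c => Action.hom_ext _ _ rfl
  have e1 : ∀ (c : G) (u : (F.obj R : Type)),
      F.map ((actPbCone K2).π.app left) (F.map (κ2 c) u) = u := by
    intro c u
    exact (map_comp_apply F _ _ u).symm.trans ((congrArg (fun k => F.map k u) (hκl c)).trans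
      (ConcreteCategory.congr_hom (F.map_id R) u))
  have e2 : ∀ (c : G) (u : (F.obj R : Type)),
      F.map ((actPbCone K2).π.app right) (F.map (κ2 c) u) = F.map (lMul c) u := by
    intro c u
    exact (map_comp_apply F _ _ u).symm.trans (congrArg (fun k => F.map k u) (hκr c))
  have hfree : ∀ (g : G) (x : Y0.V), Y0.ρ g x = x → g = 1 := by
    intro g u hu
    have hccIsCol : IsColimit cc2 := actIsColimitOfBijective Kd2 cc2 hbij2
    have hccF := bijective_cofanMap_of_isColimit (Kd2 ⋙ F) (F.mapCocone cc2)
      (isColimitOfPreserves F hccIsCol)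
    have hpbF := bijective_coneMap_of_isLimit (K2 ⋙ F) (F.mapCone (actPbCone K2))
      (isLimitOfPreserves F (actPbConeIsLimit K2))
    have key : cofanMap (Kd2 ⋙ F) (F.mapCocone cc2) ⟨g, u⟩ =
        cofanMap (Kd2 ⋙ F) (F.mapCocone cc2) ⟨1, u⟩ := by
      apply hpbF.1
      apply Subtype.ext
      apply Prod.ext
      · show F.map ((actPbCone K2).π.app left) (F.map (κ2 g) u) =
          F.map ((actPbCone K2).π.app left) (F.map (κ2 1) u)
        exact (e1 g u).trans (e1 1 u).symm
      · show F.map ((actPbCone K2).π.app right) (F.map (κ2 g) u) =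
          F.map ((actPbCone K2).π.app right) (F.map (κ2 1) u)
        refine (e2 g u).trans (Eq.trans ?_ (e2 1 u).symm)
        show Y0.ρ g u = Y0.ρ 1 u
        rw [hu, act_one_apply]
    exact congrArg Sigma.fst (hccF.1 key)
  -- the comparison map `S ×_G Y0 ⟶ F S`
  let α : ∀ S : FinRight G, (gPairObj S Y0) → (F.obj S) := fun S =>
    Quot.lift (fun p => F.map (sigmaHom S p.1) p.2) (by
      rintro ⟨s, u⟩ ⟨s', u'⟩ ⟨g, h1, h2⟩
      have h1' : s = S.ρ (op g) s' := h1
      have h2' : u' = F.map (lMul g) u := h2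
      show F.map (sigmaHom S s) u = F.map (sigmaHom S s') u'
      rw [h1', h2']
      calc F.map (sigmaHom S (S.ρ (op g) s')) u
          = F.map (lMul g ≫ sigmaHom S s') u := by rw [lMul_comp_sigmaHom]
        _ = F.map (sigmaHom S s') (F.map (lMul g) u) := map_comp_apply F _ _ u)
  have αnat : ∀ {S S' : FinRight G} (f : S ⟶ S') (x : (gPairObj S Y0 : Type)),
      α S' (gPairMapFst f Y0 x) = F.map f (α S x) := by
    intro S S' f x
    induction x using Quot.ind with
    | _ p =>
      show F.map (sigmaHom S' (f.hom p.1)) p.2 = F.map f (F.map (sigmaHom S p.1) p.2)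
      calc F.map (sigmaHom S' (f.hom p.1)) p.2
          = F.map (sigmaHom S p.1 ≫ f) p.2 := by rw [sigmaHom_comp]
        _ = F.map f (F.map (sigmaHom S p.1) p.2) := map_comp_apply F _ _ p.2
  have αbij : ∀ S : FinRight G, Function.Bijective (α S) := by
    intro S
    obtain ⟨hcpS⟩ := hF.2.1 (S.V : Type)
    haveI := hcpS
    let KC : Discrete (S.V : Type) ⥤ FinRight G := Discrete.functor (fun _ => R)
    let CC : FinRight G := actSig KC
    let injm : ∀ s : (S.V : Type), ((rReg : FinRight G) ⟶ CC) :=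
      fun s => (actSigCocone KC).ι.app ⟨s⟩
    let cmap : CC ⟶ S := mkHom (fun p => S.ρ (op p.2) p.1)
      (fun m p => act_op_mul_unop S m p.2 p.1)
    have hcsurj : Function.Surjective cmap.hom := fun s =>
      ⟨⟨s, (1 : G)⟩, by show S.ρ (op (1 : G)) s = s; rw [op_one, act_one_apply]⟩
    haveI : Epi cmap := act_epi_of_surjective cmap hcsurj
    have hFcsurj : Function.Surjective (F.map cmap) := by
      rw [← fintype_epi_iff_surjective]
      exact Functor.PreservesEpimorphisms.preserves cmap
    have hsig := bijective_cofanMap_of_isColimit (KC ⋙ F) (F.mapCocone (actSigCocone KC))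
      (isColimitOfPreserves F (actSigCoconeIsColimit KC))
    have hinjc : ∀ s : S.V, injm s ≫ cmap = sigmaHom S s := fun s => Action.hom_ext _ _ rfl
    -- the pullback of `cmap` along itself and its coproduct decomposition
    let KQ : WalkingCospan ⥤ FinRight G := cospan cmap cmap
    let SV : Type := S.V
    haveI hSVf : Finite SV := by show Finite (S.V : Type); infer_instance
    let D : Type := {d : (SV × SV) × G // S.ρ (op d.2) d.1.2 = d.1.1}
    haveI : Finite D := Subtype.finite
    obtain ⟨hcpD⟩ := hF.2.1 D
    haveI := hcpD
    let κQ : D → ((rReg : FinRight G) ⟶ actPb KQ) := fun d => mkHom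
      (fun a : G => ⟨(⟨d.1.1.1, a⟩, ⟨d.1.1.2, d.1.2 * a⟩), by
        show S.ρ (op a) d.1.1.1 = S.ρ (op (d.1.2 * a)) d.1.1.2
        rw [act_op_mul, d.2]⟩)
      (fun m (a : G) => by
        apply Subtype.ext
        apply Prod.ext
        · rfl
        · exact Sigma.mk.inj_iff.mpr ⟨rfl, heq_of_eq (mul_assoc d.1.2 a m.unop).symm⟩)
    let KdD : Discrete D ⥤ FinRight G := Discrete.functor (fun _ => (rReg : FinRight G))
    let ccD : Cocone KdD := { pt := actPb KQ, ι := Discrete.natTrans (fun d => κQ d.as) }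
    have hbijD : Function.Bijective (actCofanMap KdD ccD) := by
      apply Function.bijective_iff_has_inverse.mpr
      refine ⟨fun q => ⟨⟨((q.1.1.1, q.1.2.1), divG (G := G) q.1.2.2 q.1.1.2), div_prop S _ _ _ _ q.2⟩,
        q.1.1.2⟩, ?_, ?_⟩
      · rintro ⟨⟨⟨⟨s, t⟩, g⟩, hd⟩, a⟩
        refine Sigma.mk.inj_iff.mpr ⟨?_, HEq.rfl⟩
        apply Subtype.ext
        apply Prod.ext
        · rfl
        · exact divG_mul (G := G) g a
      · rintro ⟨⟨⟨s, a⟩, ⟨t, b⟩⟩, hcond⟩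
        apply Subtype.ext
        apply Prod.ext
        · rfl
        · exact Sigma.mk.inj_iff.mpr ⟨rfl, heq_of_eq (divG_cancel (G := G) b a)⟩
    have hccDF := bijective_cofanMap_of_isColimit (KdD ⋙ F) (F.mapCocone ccD)
      (isColimitOfPreserves F (actIsColimitOfBijective KdD ccD hbijD))
    have hpbQF := bijective_coneMap_of_isLimit (KQ ⋙ F) (F.mapCone (actPbCone KQ))
      (isLimitOfPreserves F (actPbConeIsLimit KQ))
    have hκQ1 : ∀ d : D, κQ d ≫ (actPbCone KQ).π.app left = injm d.1.1.1 :=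
      fun d => Action.hom_ext _ _ rfl
    have hκQ2 : ∀ d : D, κQ d ≫ (actPbCone KQ).π.app right = lMul d.1.2 ≫ injm d.1.1.2 :=
      fun d => Action.hom_ext _ _ rfl
    constructor
    · intro x x'
      obtain ⟨⟨s, u⟩, rfl⟩ := gmk_surjective _ _ x
      obtain ⟨⟨t, v⟩, rfl⟩ := gmk_surjective _ _ x'
      intro hα
      have hα' : F.map (sigmaHom S s) u = F.map (sigmaHom S t) v := hα
      have hcx : F.map (cospan cmap cmap |>.map Hom.inl) (F.map (injm s) u) =
          F.map (cospan cmap cmap |>.map Hom.inr) (F.map (injm t) v) := by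
        show F.map cmap (F.map (injm s) u) = F.map cmap (F.map (injm t) v)
        calc F.map cmap (F.map (injm s) u)
            = F.map (injm s ≫ cmap) u := (map_comp_apply F _ _ u).symm
          _ = F.map (sigmaHom S s) u := by rw [hinjc]
          _ = F.map (sigmaHom S t) v := hα'
          _ = F.map (injm t ≫ cmap) v := by rw [hinjc]
          _ = F.map cmap (F.map (injm t) v) := map_comp_apply F _ _ v
      obtain ⟨w, hw⟩ := hpbQF.2 ⟨(F.map (injm s) u, F.map (injm t) v), hcx⟩
      have hw1 : F.map ((actPbCone KQ).π.app left) w = F.map (injm s) u :=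
        congrArg (fun r : PbSet (KQ ⋙ F) => r.1.1) hw
      have hw2 : F.map ((actPbCone KQ).π.app right) w = F.map (injm t) v :=
        congrArg (fun r : PbSet (KQ ⋙ F) => r.1.2) hw
      obtain ⟨⟨d, z⟩, hz⟩ := hccDF.2 w
      have hz' : F.map (κQ d) z = w := hz
      have j1 : cofanMap (KC ⋙ F) (F.mapCocone (actSigCocone KC)) ⟨s, u⟩ =
          cofanMap (KC ⋙ F) (F.mapCocone (actSigCocone KC)) ⟨d.1.1.1, z⟩ := by
        show F.map (injm s) u = F.map (injm d.1.1.1) z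
        exact hw1.symm.trans ((congrArg (fun x => F.map ((actPbCone KQ).π.app left) x) hz'.symm).trans
          ((map_comp_apply F _ _ z).symm.trans (congrArg (fun k => F.map k z) (hκQ1 d))))
      have j2 : cofanMap (KC ⋙ F) (F.mapCocone (actSigCocone KC)) ⟨t, v⟩ =
          cofanMap (KC ⋙ F) (F.mapCocone (actSigCocone KC))
            ⟨d.1.1.2, F.map (lMul d.1.2) z⟩ := by
        show F.map (injm t) v = F.map (injm d.1.1.2) (F.map (lMul d.1.2) z)
        exact hw2.symm.trans ((congrArg (fun x => F.map ((actPbCone KQ).π.app right) x) hz'.symm).trans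
          ((map_comp_apply F _ _ z).symm.trans ((congrArg (fun k => F.map k z) (hκQ2 d)).trans
            (map_comp_apply F _ _ z))))
      obtain ⟨j1f, j1s⟩ := Sigma.mk.inj_iff.mp (hsig.1 j1)
      obtain ⟨j2f, j2s⟩ := Sigma.mk.inj_iff.mp (hsig.1 j2)
      subst j1f
      subst j2f
      have hu : u = z := eq_of_heq j1s
      have hv : v = F.map (lMul d.1.2) z := eq_of_heq j2s
      refine gmk_eq_iff.mpr ⟨d.1.2, d.2.symm, ?_⟩
      show v = F.map (lMul d.1.2) u
      rw [hv, hu]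
    · intro x
      obtain ⟨w, hw⟩ := hFcsurj x
      obtain ⟨⟨s, u⟩, hu⟩ := hsig.2 w
      refine ⟨gmk S Y0 (s, u), ?_⟩
      calc α S (gmk S Y0 (s, u)) = F.map (sigmaHom S s) u := rfl
        _ = F.map (injm s ≫ cmap) u := by rw [hinjc]
        _ = F.map cmap (F.map (injm s) u) := map_comp_apply F _ _ u
        _ = F.map cmap w := by rw [show F.map (injm s) u = w from hu]
        _ = x := hw
  -- assemble the isomorphism
  refine ⟨⟨Y0, hfree⟩, ⟨?_⟩⟩
  refine
    { hom := { hom := { app := fun S => FintypeCat.homMk (α S : (gPairObj S Y0) → F.obj S)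
                        naturality := fun S S' f => FintypeCat.hom_ext _ _ fun x => αnat f x } }
      inv := { hom := { app := fun S => FintypeCat.homMk fun x => (Equiv.ofBijective _ (αbij S)).symm x
                        naturality := fun S S' f => FintypeCat.hom_ext _ _ fun x => ?_ } }
      hom_inv_id := ?_
      inv_hom_id := ?_ }
  · apply (αbij S').1
    have hx : α S ((Equiv.ofBijective _ (αbij S)).symm x) = x :=
      (Equiv.ofBijective _ (αbij S)).apply_symm_apply x
    have hy : α S' ((Equiv.ofBijective _ (αbij S')).symm (F.map f x)) = F.map f x :=
      (Equiv.ofBijective _ (αbij S')).apply_symm_apply (F.map f x)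
    show α S' ((Equiv.ofBijective _ (αbij S')).symm (F.map f x)) =
      α S' (gPairMapFst f Y0 ((Equiv.ofBijective _ (αbij S)).symm x))
    rw [hy, αnat f, hx]
  · apply ObjectProperty.hom_ext
    apply NatTrans.ext
    funext S
    refine FintypeCat.hom_ext _ _ fun x => ?_
    show (Equiv.ofBijective _ (αbij S)).symm (α S x) = x
    exact (Equiv.ofBijective _ (αbij S)).symm_apply_apply x
  · apply ObjectProperty.hom_ext
    apply NatTrans.ext
    funext S
    refine FintypeCat.hom_ext _ _ fun x => ?_
    show α S ((Equiv.ofBijective _ (αbij S)).symm x) = x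
    exact (Equiv.ofBijective _ (αbij S)).apply_symm_apply x

end PP5
section PP6

open WalkingCospan

variable [Finite G]

/-- `a⁻¹ * b`, packaged to avoid elaboration issues with coerced carriers. -/
def ldivG (a b : G) : G := a⁻¹ * b

lemma ldivG_mul (a g : G) : ldivG a (a * g) = g := inv_mul_cancel_left a g

lemma ldivG_cancel (a b : G) : a * ldivG a b = b := mul_inv_cancel_left a b

lemma ldiv_prop (Y' : ActCat G) (y t : Y'.V) (a b : G)
    (h : Y'.ρ a y = Y'.ρ b t) : Y'.ρ (ldivG a b) t = y := by
  show Y'.ρ (a⁻¹ * b) t = y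
  rw [act_mul_apply, ← h, ← act_mul_apply, inv_mul_cancel, act_one_apply]

lemma gPairingFst_essSurj : (gPairingFst G pce_fst).EssSurj := by
  constructor
  rintro ⟨F, hF⟩
  obtain ⟨hpb⟩ := hF.1
  haveI := hpb
  haveI := hF.2.2
  -- the right action of `G` on `F.obj lReg`
  let FL : Type := F.obj (lReg : FinFreeL G)
  let ρS : Gᵐᵒᵖ → FL → FL := fun m u => F.map (rMul m.unop) u
  have ρS1 : ∀ u, ρS 1 u = u := fun u => by
    show F.map (rMul ((1 : Gᵐᵒᵖ).unop)) u = u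
    rw [unop_one, rMul_one, F.map_id]
    rfl
  have ρSm : ∀ m n u, ρS (m * n) u = ρS m (ρS n u) := fun m n u => by
    show F.map (rMul ((m * n).unop)) u = F.map (rMul m.unop) (F.map (rMul n.unop) u)
    rw [unop_mul, rMul_mul, F.map_comp]
    rfl
  let S0 : FinRight G := mkAct FL ρS ρS1 ρSm
  -- the comparison map `S0 ×_G Y ⟶ F Y`
  let α : ∀ Y : FinFreeL G, (gPairObj S0 Y.obj) → (F.obj Y) := fun Y =>
    Quot.lift (fun p => F.map (muHom Y p.2) p.1) (by
      rintro ⟨u, y⟩ ⟨u', y'⟩ ⟨g, h1, h2⟩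
      have h1' : u = F.map (rMul g) u' := h1
      have h2' : y' = Y.obj.ρ g y := h2
      show F.map (muHom Y y) u = F.map (muHom Y y') u'
      rw [h1', h2']
      calc F.map (muHom Y y) (F.map (rMul g) u')
          = F.map (rMul g ≫ muHom Y y) u' := (map_comp_apply F _ _ u').symm
        _ = F.map (muHom Y (Y.obj.ρ g y)) u' := by rw [rMul_comp_muHom])
  have αnat : ∀ {Y Y' : FinFreeL G} (f : Y ⟶ Y') (x : (gPairObj S0 Y.obj)),
      α Y' (gPairMapSnd S0 f.hom x) = F.map f (α Y x) := by
    intro Y Y' f x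
    induction x using Quot.ind with
    | _ p =>
      show F.map (muHom Y' (f.hom.hom p.2)) p.1 = F.map f (F.map (muHom Y p.2) p.1)
      calc F.map (muHom Y' (f.hom.hom p.2)) p.1
          = F.map (muHom Y p.2 ≫ f) p.1 := by rw [muHom_comp]
        _ = F.map f (F.map (muHom Y p.2) p.1) := map_comp_apply F _ _ p.1
  have αbij : ∀ Y : FinFreeL G, Function.Bijective (α Y) := by
    intro Y
    let YV : Type := Y.obj.V
    haveI hYVf : Finite YV := by show Finite (Y.obj.V : Type); infer_instance
    obtain ⟨hcpY⟩ := hF.2.1 YV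
    haveI := hcpY
    let KC : Discrete YV ⥤ FinFreeL G := Discrete.functor (fun _ => (lReg : FinFreeL G))
    let CC : FinFreeL G := (freeSigCocone KC).pt
    let injm : ∀ y : YV, ((lReg : FinFreeL G) ⟶ CC) :=
      fun y => (freeSigCocone KC).ι.app ⟨y⟩
    let cmap : CC ⟶ Y := ObjectProperty.homMk <| mkHom (X := CC.obj) (Y := Y.obj) (fun p => Y.obj.ρ p.2 p.1)
      (fun m p => act_mul_apply Y.obj m p.2 p.1)
    have hcsurj : Function.Surjective cmap.hom.hom := fun y =>
      ⟨⟨y, (1 : G)⟩, by show Y.obj.ρ (1 : G) y = y; rw [act_one_apply]⟩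
    haveI : Epi cmap := free_epi_of_surjective cmap hcsurj
    have hFcsurj : Function.Surjective (F.map cmap) := by
      rw [← fintype_epi_iff_surjective]
      exact Functor.PreservesEpimorphisms.preserves cmap
    have hsig := bijective_cofanMap_of_isColimit (KC ⋙ F) (F.mapCocone (freeSigCocone KC))
      (isColimitOfPreserves F (freeSigCoconeIsColimit KC))
    have hinjc : ∀ y : YV, injm y ≫ cmap = muHom Y y := fun y => ObjectProperty.hom_ext _ (Action.hom_ext _ _ rfl)
    -- the pullback of `cmap` along itself and its coproduct decomposition
    let KQ : WalkingCospan ⥤ FinFreeL G := cospan cmap cmap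
    let D : Type := {d : (YV × YV) × G // Y.obj.ρ d.2 d.1.2 = d.1.1}
    haveI : Finite D := Subtype.finite
    obtain ⟨hcpD⟩ := hF.2.1 D
    haveI := hcpD
    let κQ : D → ((lReg : FinFreeL G) ⟶ (freePbCone KQ).pt) := fun d => ObjectProperty.homMk <| mkHom
      (X := (lReg (G := G)).obj) (Y := (freePbCone KQ).pt.obj)
      (fun a : G => ⟨(⟨d.1.1.1, a⟩, ⟨d.1.1.2, a * d.1.2⟩), by
        show Y.obj.ρ a d.1.1.1 = Y.obj.ρ (a * d.1.2) d.1.1.2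
        rw [act_mul_apply, d.2]⟩)
      (fun m (a : G) => by
        apply Subtype.ext
        apply Prod.ext
        · rfl
        · exact Sigma.mk.inj_iff.mpr ⟨rfl, heq_of_eq (mul_assoc m a d.1.2)⟩)
    let KdD : Discrete D ⥤ FinFreeL G := Discrete.functor (fun _ => (lReg : FinFreeL G))
    let ccD : Cocone KdD := { pt := (freePbCone KQ).pt, ι := Discrete.natTrans (fun d => κQ d.as) }
    have hbijD : Function.Bijective (actCofanMap (KdD ⋙ ObjectProperty.ι _)
        ((ObjectProperty.ι _).mapCocone ccD)) := by
      apply Function.bijective_iff_has_inverse.mpr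
      refine ⟨fun q => ⟨⟨((q.1.1.1, q.1.2.1), ldivG (G := G) q.1.1.2 q.1.2.2),
        ldiv_prop Y.obj _ _ _ _ q.2⟩, q.1.1.2⟩, ?_, ?_⟩
      · rintro ⟨⟨⟨⟨y, t⟩, g⟩, hd⟩, a⟩
        refine Sigma.mk.inj_iff.mpr ⟨?_, HEq.rfl⟩
        apply Subtype.ext
        apply Prod.ext
        · rfl
        · exact ldivG_mul (G := G) a g
      · rintro ⟨⟨⟨y, a⟩, ⟨t, b⟩⟩, hcond⟩
        apply Subtype.ext
        apply Prod.ext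
        · rfl
        · exact Sigma.mk.inj_iff.mpr ⟨rfl, heq_of_eq (ldivG_cancel (G := G) a b)⟩
    have hccDF := bijective_cofanMap_of_isColimit (KdD ⋙ F) (F.mapCocone ccD)
      (isColimitOfPreserves F (freeIsColimitOfBijective KdD ccD hbijD))
    have hpbQF := bijective_coneMap_of_isLimit (KQ ⋙ F) (F.mapCone (freePbCone KQ))
      (isLimitOfPreserves F (freePbConeIsLimit KQ))
    have hκQ1 : ∀ d : D, κQ d ≫ (freePbCone KQ).π.app left = injm d.1.1.1 :=
      fun d => ObjectProperty.hom_ext _ (Action.hom_ext _ _ rfl)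
    have hκQ2 : ∀ d : D, κQ d ≫ (freePbCone KQ).π.app right = rMul d.1.2 ≫ injm d.1.1.2 :=
      fun d => ObjectProperty.hom_ext _ (Action.hom_ext _ _ rfl)
    constructor
    · intro x x'
      obtain ⟨⟨u, y⟩, rfl⟩ := gmk_surjective _ _ x
      obtain ⟨⟨v, t⟩, rfl⟩ := gmk_surjective _ _ x'
      intro hα
      have hα' : F.map (muHom Y y) u = F.map (muHom Y t) v := hα
      have hcx : (KQ ⋙ F).map Hom.inl (F.map (injm y) u) =
          (KQ ⋙ F).map Hom.inr (F.map (injm t) v) := by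
        show F.map cmap (F.map (injm y) u) = F.map cmap (F.map (injm t) v)
        calc F.map cmap (F.map (injm y) u)
            = F.map (injm y ≫ cmap) u := (map_comp_apply F _ _ u).symm
          _ = F.map (muHom Y y) u := by rw [hinjc]
          _ = F.map (muHom Y t) v := hα'
          _ = F.map (injm t ≫ cmap) v := by rw [hinjc]
          _ = F.map cmap (F.map (injm t) v) := map_comp_apply F _ _ v
      obtain ⟨w, hw⟩ := hpbQF.2 ⟨(F.map (injm y) u, F.map (injm t) v), hcx⟩
      have hw1 : F.map ((freePbCone KQ).π.app left) w = F.map (injm y) u :=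
        congrArg (fun r : PbSet (KQ ⋙ F) => r.1.1) hw
      have hw2 : F.map ((freePbCone KQ).π.app right) w = F.map (injm t) v :=
        congrArg (fun r : PbSet (KQ ⋙ F) => r.1.2) hw
      obtain ⟨⟨d, z⟩, hz⟩ := hccDF.2 w
      have hz' : F.map (κQ d) z = w := hz
      have j1 : cofanMap (KC ⋙ F) (F.mapCocone (freeSigCocone KC)) ⟨y, u⟩ =
          cofanMap (KC ⋙ F) (F.mapCocone (freeSigCocone KC)) ⟨d.1.1.1, z⟩ := by
        show F.map (injm y) u = F.map (injm d.1.1.1) z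
        exact hw1.symm.trans ((congrArg (fun x => F.map ((freePbCone KQ).π.app left) x) hz'.symm).trans
          ((map_comp_apply F _ _ z).symm.trans (congrArg (fun k => F.map k z) (hκQ1 d))))
      have j2 : cofanMap (KC ⋙ F) (F.mapCocone (freeSigCocone KC)) ⟨t, v⟩ =
          cofanMap (KC ⋙ F) (F.mapCocone (freeSigCocone KC))
            ⟨d.1.1.2, F.map (rMul d.1.2) z⟩ := by
        show F.map (injm t) v = F.map (injm d.1.1.2) (F.map (rMul d.1.2) z)
        exact hw2.symm.trans ((congrArg (fun x => F.map ((freePbCone KQ).π.app right) x) hz'.symm).trans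
          ((map_comp_apply F _ _ z).symm.trans ((congrArg (fun k => F.map k z) (hκQ2 d)).trans
            (map_comp_apply F _ _ z))))
      obtain ⟨j1f, j1s⟩ := Sigma.mk.inj_iff.mp (hsig.1 j1)
      obtain ⟨j2f, j2s⟩ := Sigma.mk.inj_iff.mp (hsig.1 j2)
      subst j1f
      subst j2f
      have hu : u = z := eq_of_heq j1s
      have hv : v = F.map (rMul d.1.2) z := eq_of_heq j2s
      refine (gmk_eq_iff.mpr ⟨d.1.2, ?_, d.2.symm⟩).symm
      show v = F.map (rMul d.1.2) u
      rw [hv, hu]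
    · intro x
      obtain ⟨w, hw⟩ := hFcsurj x
      obtain ⟨⟨y, u⟩, hu⟩ := hsig.2 w
      refine ⟨gmk S0 Y.obj (u, y), ?_⟩
      calc α Y (gmk S0 Y.obj (u, y)) = F.map (muHom Y y) u := rfl
        _ = F.map (injm y ≫ cmap) u := by rw [hinjc]
        _ = F.map cmap (F.map (injm y) u) := map_comp_apply F _ _ u
        _ = F.map cmap w := by rw [show F.map (injm y) u = w from hu]
        _ = x := hw
  -- assemble the isomorphism
  refine ⟨S0, ⟨?_⟩⟩
  refine
    { hom := { hom := { app := fun Y => FintypeCat.homMk (α Y : (gPairObj S0 Y.obj) → F.obj Y)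
                        naturality := fun Y Y' f => FintypeCat.hom_ext _ _ fun x => αnat f x } }
      inv := { hom := { app := fun Y => FintypeCat.homMk fun x => (Equiv.ofBijective _ (αbij Y)).symm x
                        naturality := fun Y Y' f => FintypeCat.hom_ext _ _ fun x => ?_ } }
      hom_inv_id := ?_
      inv_hom_id := ?_ }
  · apply (αbij Y').1
    have hx : α Y ((Equiv.ofBijective _ (αbij Y)).symm x) = x :=
      (Equiv.ofBijective _ (αbij Y)).apply_symm_apply x
    have hy : α Y' ((Equiv.ofBijective _ (αbij Y')).symm (F.map f x)) = F.map f x :=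
      (Equiv.ofBijective _ (αbij Y')).apply_symm_apply (F.map f x)
    show α Y' ((Equiv.ofBijective _ (αbij Y')).symm (F.map f x)) =
      α Y' (gPairMapSnd S0 f.hom ((Equiv.ofBijective _ (αbij Y)).symm x))
    rw [hy, αnat f, hx]
  · apply ObjectProperty.hom_ext
    apply NatTrans.ext
    funext Y
    refine FintypeCat.hom_ext _ _ fun x => ?_
    show (Equiv.ofBijective _ (αbij Y)).symm (α Y x) = x
    exact (Equiv.ofBijective _ (αbij Y)).symm_apply_apply x
  · apply ObjectProperty.hom_ext
    apply NatTrans.ext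
    funext Y
    refine FintypeCat.hom_ext _ _ fun x => ?_
    show α Y ((Equiv.ofBijective _ (αbij Y)).symm x) = x
    exact (Equiv.ofBijective _ (αbij Y)).apply_symm_apply x

end PP6

/-- Corollary `PerfPairCor`. For a finite group `G`, the functor
`- ×_G - : Fin_G × ^G Fin → Fin` is a perfect pairing: it preserves pullbacks, finite
coproducts and epimorphisms separately in each variable, and the two induced functors
`Fin_G → Fun_pce(^G Fin, Fin)` and `^G Fin → Fun_pce(Fin_G, Fin)` are both equivalences. -/
theorem perfect_pairing_single (G : Type) [Group G] [Fintype G] :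
    ∃ (h₁ : ∀ S : FinRight G, PreservesPCE (gPairFstFunctor G S))
      (h₂ : ∀ Y : FinFreeL G, PreservesPCE (gPairSndFunctor G Y.obj)),
      (gPairingFst G h₁).IsEquivalence ∧ (gPairingSnd G h₂).IsEquivalence := by
  refine ⟨pce_fst, pce_snd, ?_, ?_⟩
  · haveI := gPairingFst_faithful (G := G)
    haveI := gPairingFst_full (G := G)
    haveI := gPairingFst_essSurj (G := G)
    exact ⟨inferInstance, inferInstance, inferInstance⟩
  · haveI := gPairingSnd_faithful (G := G)
    haveI := gPairingSnd_full (G := G)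
    haveI := gPairingSnd_essSurj (G := G)
    exact ⟨inferInstance, inferInstance, inferInstance⟩

end Paper
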